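/- Let (a,b,c) be a primitive Pythagorean triple with a² + b² = c², gcd(a,b) = 1, and b < a. Set n₁ = a² − b², n₂ = a², n₃ = a² + b² = c². Then 0 < n₁ < n₂ < n₃, gcd(n₁,n₂,n₃) = 1, the fulcrum constant satisfies F = (a² − b²)/(2a²) < 1/2, and the median factorization length of S = ⟨n₁,n₂,n₃⟩ satisfies η(n)/n → (1/(a²−b²))·(1 − c/(2a)) + (1/(a²+b²))·(c/(2a)) as n → ∞ over S; in particular this limit is a rational number. -/

import Mathlib

set_option maxHeartbeats 1600000


/-- The (finite) set of factorizations of `n` in the numerical semigroup `⟨n₁, n₂, n₃⟩`: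
triples `(a₁, a₂, a₃) ∈ ℕ³` with `a₁n₁ + a₂n₂ + a₃n₃ = n`.  (Each coordinate is at most `n`
whenever the generators are positive, so the bounding box `[0,n]³` captures all of them.) -/
def Zf (n₁ n₂ n₃ n : ℕ) : Finset (ℕ × ℕ × ℕ) :=
  (Finset.range (n + 1) ×ˢ Finset.range (n + 1) ×ˢ Finset.range (n + 1)).filter
    (fun a => a.1 * n₁ + a.2.1 * n₂ + a.2.2 * n₃ = n)

/-- The length of a factorization. -/
def len (a : ℕ × ℕ × ℕ) : ℕ := a.1 + a.2.1 + a.2.2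

/-- Membership in the numerical semigroup `⟨n₁, n₂, n₃⟩`. -/
def inS (n₁ n₂ n₃ n : ℕ) : Prop := ∃ a₁ a₂ a₃ : ℕ, a₁ * n₁ + a₂ * n₂ + a₃ * n₃ = n

/-- `fmul n₁ n₂ n₃ n ℓ` is the number of factorizations of `n` having length `ℓ`. -/
def fmul (n₁ n₂ n₃ n ℓ : ℕ) : ℕ := ((Zf n₁ n₂ n₃ n).filter (fun a => len a = ℓ)).card

/-- The mode frequency `ν(n)`: the maximum, over all lengths `ℓ ∈ ℕ`, of the number of
factorizations of `n` of length `ℓ`. -/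
noncomputable def modeFreq (n₁ n₂ n₃ n : ℕ) : ℕ := sSup (Set.range (fmul n₁ n₂ n₃ n))

/-- The set `γ(n)` of mode factorization lengths. -/
def modeSet (n₁ n₂ n₃ n : ℕ) : Set ℕ := {ℓ | fmul n₁ n₂ n₃ n ℓ = modeFreq n₁ n₂ n₃ n}

/-- The mean factorization length `μ(n)`. -/
def meanLen (n₁ n₂ n₃ n : ℕ) : ℚ :=
  (∑ z ∈ Zf n₁ n₂ n₃ n, (len z : ℚ)) / ((Zf n₁ n₂ n₃ n).card : ℚ)

/-- The lengths of all factorizations of `n`, counted with multiplicity, in nondecreasing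
order. -/
def sortedLengths (n₁ n₂ n₃ n : ℕ) : List ℕ :=
  Multiset.sort ((Zf n₁ n₂ n₃ n).val.map len) (· ≤ ·)

/-- The median factorization length `η(n)`: with the lengths listed with multiplicity in
nondecreasing order as `ℓ₁ ≤ ⋯ ≤ ℓ_M`, it is `ℓ_{(M+1)/2}` for odd `M` and
`(ℓ_{M/2} + ℓ_{M/2+1})/2` for even `M`. -/
def medianLen (n₁ n₂ n₃ n : ℕ) : ℚ :=
  let l := sortedLengths n₁ n₂ n₃ n
  if l.length % 2 = 1 then (l.getD (l.length / 2) 0 : ℚ)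
  else ((l.getD (l.length / 2 - 1) 0 : ℚ) + (l.getD (l.length / 2) 0 : ℚ)) / 2


lemma mem_Zf_iff {n₁ n₂ n₃ n : ℕ} (h1 : 0 < n₁) (h2 : 0 < n₂) (h3 : 0 < n₃)
    {z : ℕ × ℕ × ℕ} : z ∈ Zf n₁ n₂ n₃ n ↔ z.1 * n₁ + z.2.1 * n₂ + z.2.2 * n₃ = n := by
  obtain ⟨x, y, w⟩ := z
  simp only [Zf, Finset.mem_filter, Finset.mem_product, Finset.mem_range]
  constructor
  · rintro ⟨-, h⟩; exact h
  · intro h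
    refine ⟨⟨?_, ?_, ?_⟩, h⟩ <;> simp at h ⊢ <;> nlinarith

lemma len_le_of_mem {n₁ n₂ n₃ n : ℕ} (h1 : 0 < n₁) (h2 : 0 < n₂) (h3 : 0 < n₃)
    {z : ℕ × ℕ × ℕ} (hz : z ∈ Zf n₁ n₂ n₃ n) : len z ≤ n := by
  rw [mem_Zf_iff h1 h2 h3] at hz
  obtain ⟨x, y, w⟩ := z
  simp only [len] at *
  nlinarith

/-- key deduction: in right region, a₁ = a₃ + u -/
lemma key_eq {d n₁ n ℓ u x y w : ℕ} (hd : 0 < d)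
    (hmem : x * n₁ + y * (n₁ + d) + w * (n₁ + 2 * d) = n)
    (hlen : x + y + w = ℓ) (hu : n + u * d = ℓ * (n₁ + d)) : x = w + u := by
  have key : (x : ℤ) * d = ((w : ℤ) + u) * d := by
    have hmem' : (x : ℤ) * n₁ + y * (n₁ + d) + w * (n₁ + 2 * d) = n := by exact_mod_cast hmem
    have hlen' : (x : ℤ) + y + w = ℓ := by exact_mod_cast hlen
    have hu' : (n : ℤ) + u * d = ℓ * (n₁ + d) := by exact_mod_cast hu
    linear_combination hlen' * ((n₁ : ℤ) + d) - hmem' - hu'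
  have : (x : ℤ) = (w : ℤ) + u := by
    have hd' : (d : ℤ) ≠ 0 := by exact_mod_cast hd.ne'
    exact mul_right_cancel₀ hd' key
  exact_mod_cast this

/-- right region count: `n + u*d = ℓ*n₂`, `u ≤ ℓ`. -/
lemma fmul_right {d n₁ n₂ n₃ n ℓ u : ℕ} (hd : 0 < d) (h1 : 0 < n₁)
    (e2 : n₂ = n₁ + d) (e3 : n₃ = n₂ + d)
    (hu : n + u * d = ℓ * n₂) (hul : u ≤ ℓ) :
    fmul n₁ n₂ n₃ n ℓ = (ℓ - u) / 2 + 1 := by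
  subst e3; subst e2
  have h2 : 0 < n₁ + d := by omega
  have h3 : 0 < n₁ + d + d := by omega
  have e3' : n₁ + d + d = n₁ + 2 * d := by ring
  rw [fmul]
  rw [show (ℓ - u) / 2 + 1 = (Finset.range ((ℓ - u) / 2 + 1)).card by simp]
  apply Finset.card_bij' (fun z _ => z.2.2)
      (fun i _ => (i + u, ℓ - (2 * i + u), i))
  · rintro ⟨x, y, w⟩ hz
    simp only [Finset.mem_filter, Finset.mem_range] at hz ⊢
    obtain ⟨hmem, hlen⟩ := hz
    rw [mem_Zf_iff h1 h2 h3] at hmem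
    simp only [len] at hlen
    simp only [e3'] at hmem
    have hx : x = w + u := key_eq hd hmem hlen hu
    have : 2 * w + u ≤ ℓ := by omega
    omega
  · intro i hi
    simp only [Finset.mem_range] at hi
    have h2i : 2 * i + u ≤ ℓ := by
      have hle : i ≤ (ℓ - u) / 2 := by omega
      have := Nat.le_div_iff_mul_le (k := 2) (by norm_num) |>.mp hle
      omega
    rw [Finset.mem_filter]
    constructor
    · rw [mem_Zf_iff h1 h2 h3]
      simp only
      have goZ : ((i : ℤ) + u) * n₁ + ((ℓ : ℤ) - (2 * i + u)) * (n₁ + d) + i * (n₁ + d + d) = n := by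
        have hu' : (n : ℤ) + u * d = ℓ * (n₁ + d) := by exact_mod_cast hu
        linear_combination -hu'
      have := goZ
      zify [h2i]
      linarith [goZ]
    · simp only [len]; omega
  · rintro ⟨x, y, w⟩ hz
    simp only [Finset.mem_filter] at hz
    obtain ⟨hmem, hlen⟩ := hz
    rw [mem_Zf_iff h1 h2 h3] at hmem
    simp only [len] at hlen
    simp only [e3'] at hmem
    have hx : x = w + u := key_eq hd hmem hlen hu
    simp only [Prod.mk.injEq]
    exact ⟨by omega, by omega, trivial⟩
  · intro i hi; rfl

/-- left region count: `ℓ*n₂ + u*d = n`, `u ≤ ℓ`. -/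
lemma fmul_left {d n₁ n₂ n₃ n ℓ u : ℕ} (hd : 0 < d) (h1 : 0 < n₁)
    (e2 : n₂ = n₁ + d) (e3 : n₃ = n₂ + d)
    (hu : ℓ * n₂ + u * d = n) (hul : u ≤ ℓ) :
    fmul n₁ n₂ n₃ n ℓ = (ℓ - u) / 2 + 1 := by
  subst e3; subst e2
  have h2 : 0 < n₁ + d := by omega
  have h3 : 0 < n₁ + d + d := by omega
  have e3' : n₁ + d + d = n₁ + 2 * d := by ring
  have hu' : (ℓ : ℤ) * (n₁ + d) + u * d = n := by exact_mod_cast hu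
  have keyL : ∀ x y w : ℕ, x * n₁ + y * (n₁ + d) + w * (n₁ + 2 * d) = n →
      x + y + w = ℓ → w = x + u := by
    intro x y w hmem hlen
    have hmem' : (x : ℤ) * n₁ + y * (n₁ + d) + w * (n₁ + 2 * d) = n := by exact_mod_cast hmem
    have hlen' : (x : ℤ) + y + w = ℓ := by exact_mod_cast hlen
    have key : (w : ℤ) * d = ((x : ℤ) + u) * d := by
      linear_combination hmem' - hu' - hlen' * ((n₁ : ℤ) + d)
    have hd' : (d : ℤ) ≠ 0 := by exact_mod_cast hd.ne'
    exact_mod_cast mul_right_cancel₀ hd' key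
  rw [fmul]
  rw [show (ℓ - u) / 2 + 1 = (Finset.range ((ℓ - u) / 2 + 1)).card by simp]
  apply Finset.card_bij' (fun z _ => z.1)
      (fun i _ => (i, ℓ - (2 * i + u), i + u))
  · rintro ⟨x, y, w⟩ hz
    simp only [Finset.mem_filter, Finset.mem_range] at hz ⊢
    obtain ⟨hmem, hlen⟩ := hz
    rw [mem_Zf_iff h1 h2 h3] at hmem
    simp only [len] at hlen
    simp only [e3'] at hmem
    have hx : w = x + u := keyL x y w hmem hlen
    have : 2 * x + u ≤ ℓ := by omega
    omega
  · intro i hi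
    simp only [Finset.mem_range] at hi
    have h2i : 2 * i + u ≤ ℓ := by
      have hle : i ≤ (ℓ - u) / 2 := by omega
      have := Nat.le_div_iff_mul_le (k := 2) (by norm_num) |>.mp hle
      omega
    rw [Finset.mem_filter]
    constructor
    · rw [mem_Zf_iff h1 h2 h3]
      simp only
      have goZ : (i : ℤ) * n₁ + ((ℓ : ℤ) - (2 * i + u)) * (n₁ + d) + ((i : ℤ) + u) * (n₁ + d + d) = n := by
        linear_combination hu'
      zify [h2i]
      linarith [goZ]
    · simp only [len]; omega
  · rintro ⟨x, y, w⟩ hz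
    simp only [Finset.mem_filter] at hz
    obtain ⟨hmem, hlen⟩ := hz
    rw [mem_Zf_iff h1 h2 h3] at hmem
    simp only [len] at hlen
    simp only [e3'] at hmem
    have hx : w = x + u := keyL x y w hmem hlen
    simp only [Prod.mk.injEq]
    exact ⟨trivial, by omega, by omega⟩
  · intro i hi; rfl

lemma fmul_ne_zero_iff {d n₁ n₂ n₃ n : ℕ} (hd : 0 < d) (h1 : 0 < n₁)
    (e2 : n₂ = n₁ + d) (e3 : n₃ = n₂ + d) (ℓ : ℕ) :
    fmul n₁ n₂ n₃ n ℓ ≠ 0 ↔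
      (ℓ * n₁ ≤ n ∧ n ≤ ℓ * n₃ ∧ (d : ℤ) ∣ ((ℓ : ℤ) * n₂ - n)) := by
  have h2 : 0 < n₂ := by omega
  have h3 : 0 < n₃ := by omega
  constructor
  · intro hne
    have : ((Zf n₁ n₂ n₃ n).filter (fun a => len a = ℓ)).Nonempty := by
      rw [← Finset.card_ne_zero]; exact hne
    obtain ⟨⟨x, y, w⟩, hz⟩ := this
    rw [Finset.mem_filter] at hz
    obtain ⟨hmem, hlen⟩ := hz
    rw [mem_Zf_iff h1 h2 h3] at hmem
    simp only [len] at hlen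
    simp only at hmem
    have hy1 : y * n₁ ≤ y * n₂ := Nat.mul_le_mul_left y (by omega)
    have hw1 : w * n₁ ≤ w * n₃ := Nat.mul_le_mul_left w (by omega)
    have hx3 : x * n₁ ≤ x * n₃ := Nat.mul_le_mul_left x (by omega)
    have hy3 : y * n₂ ≤ y * n₃ := Nat.mul_le_mul_left y (by omega)
    refine ⟨?_, ?_, ⟨(x : ℤ) - w, ?_⟩⟩
    · calc ℓ * n₁ = x * n₁ + y * n₁ + w * n₁ := by rw [← hlen]; ring
        _ ≤ n := by omega
    · calc n = x * n₁ + y * n₂ + w * n₃ := hmem.symm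
        _ ≤ x * n₃ + y * n₃ + w * n₃ := by omega
        _ = ℓ * n₃ := by rw [← hlen]; ring
    · have hmem' : (x : ℤ) * n₁ + y * n₂ + w * n₃ = n := by exact_mod_cast hmem
      have hlen' : (x : ℤ) + y + w = ℓ := by exact_mod_cast hlen
      have e2' : (n₂ : ℤ) = n₁ + d := by exact_mod_cast e2
      have e3' : (n₃ : ℤ) = n₂ + d := by exact_mod_cast e3
      linear_combination hmem' - (n₂ : ℤ) * hlen' + (x : ℤ) * e2' - (w : ℤ) * e3'
  · rintro ⟨hn1, hn3, k, hk⟩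
    rcases le_or_gt n (ℓ * n₂) with hc | hc
    · -- right region
      have hk0 : 0 ≤ k := by
        by_contra hneg
        push_neg at hneg
        have : (ℓ : ℤ) * n₂ - n < 0 := by
          calc (ℓ : ℤ) * n₂ - n = d * k := hk
            _ < 0 := by
              apply mul_neg_of_pos_of_neg _ hneg
              exact_mod_cast hd
        have : (ℓ : ℤ) * n₂ < n := by linarith
        have : (ℓ : ℕ) * n₂ < n := by exact_mod_cast this
        omega
      set u := k.toNat with hu
      have hku : (k : ℤ) = u := by simp [hu, Int.toNat_of_nonneg hk0]
      have hequ : n + u * d = ℓ * n₂ := by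
        have : (n : ℤ) + u * d = ℓ * n₂ := by rw [← hku]; linarith [hk]
        exact_mod_cast this
      have hul : u ≤ ℓ := by
        have : u * d ≤ ℓ * d := by
          have h2' : ℓ * n₂ = ℓ * n₁ + ℓ * d := by rw [e2]; ring
          omega
        exact Nat.le_of_mul_le_mul_right this hd
      rw [fmul_right hd h1 e2 e3 hequ hul]
      omega
    · -- left region
      have hk0 : k ≤ 0 := by
        by_contra hneg
        push_neg at hneg
        have : (0 : ℤ) < (ℓ : ℤ) * n₂ - n := by
          rw [hk]
          exact mul_pos (by exact_mod_cast hd) hneg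
        have : (n : ℕ) < ℓ * n₂ := by exact_mod_cast (by linarith : (n : ℤ) < ℓ * n₂)
        omega
      set u := (-k).toNat with hu
      have hku : (-k : ℤ) = u := by simp [hu, Int.toNat_of_nonneg (neg_nonneg.mpr hk0)]
      have hequ : ℓ * n₂ + u * d = n := by
        have : (ℓ : ℤ) * n₂ + u * d = n := by rw [← hku]; linarith [hk]
        exact_mod_cast this
      have hul : u ≤ ℓ := by
        have : u * d ≤ ℓ * d := by
          have h3' : ℓ * n₃ = ℓ * n₂ + ℓ * d := by rw [e3]; ring
          omega
        exact Nat.le_of_mul_le_mul_right this hd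
      rw [fmul_left hd h1 e2 e3 hequ hul]
      omega

lemma card_filter_len {n₁ n₂ n₃ n : ℕ} (h1 : 0 < n₁) (h2 : 0 < n₂) (h3 : 0 < n₃)
    (P : ℕ → Prop) [DecidablePred P] :
    ((Zf n₁ n₂ n₃ n).filter (fun z => P (len z))).card =
      ∑ ℓ ∈ (Finset.range (n + 1)).filter P, fmul n₁ n₂ n₃ n ℓ := by
  rw [Finset.card_eq_sum_card_fiberwise
    (f := len) (t := (Finset.range (n + 1)).filter P) ?_]
  · apply Finset.sum_congr rfl
    intro ℓ hℓ
    rw [Finset.mem_filter, Finset.mem_range] at hℓ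
    rw [fmul, Finset.filter_filter]
    congr 1
    apply Finset.filter_congr
    intro z hz
    constructor
    · rintro ⟨-, h⟩; exact h
    · intro h; exact ⟨by rw [h]; exact hℓ.2, h⟩
  · intro z hz
    rw [Finset.mem_coe, Finset.mem_filter] at hz
    rw [Finset.mem_coe, Finset.mem_filter, Finset.mem_range]
    exact ⟨Nat.lt_succ_of_le (len_le_of_mem h1 h2 h3 hz.1), hz.2⟩

lemma sum_range_cast (K : ℕ) : ∑ j ∈ Finset.range K, (j : ℚ) = K * (K - 1) / 2 := by
  induction K with
  | zero => simp
  | succ m ih =>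
    rw [Finset.sum_range_succ, ih]
    push_cast
    ring

lemma inVmax {d n₁ n₂ n₃ n : ℕ} (hd : 0 < d) (h1 : 0 < n₁) (e2 : n₂ = n₁ + d)
    (e3 : n₃ = n₂ + d) (hn : inS n₁ n₂ n₃ n) :
    ∃ ℓt : ℕ, fmul n₁ n₂ n₃ n ℓt ≠ 0 ∧ (∀ ℓ, fmul n₁ n₂ n₃ n ℓ ≠ 0 → ℓ ≤ ℓt) ∧
      n < ℓt * n₁ + d * n₁ := by
  classical
  have h2 : 0 < n₂ := by omega
  have h3 : 0 < n₃ := by omega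
  set V := (Finset.range (n + 1)).filter (fun ℓ => fmul n₁ n₂ n₃ n ℓ ≠ 0) with hV
  have hsub : ∀ ℓ, fmul n₁ n₂ n₃ n ℓ ≠ 0 → ℓ ∈ V := by
    intro ℓ hℓ
    rw [hV, Finset.mem_filter, Finset.mem_range]
    refine ⟨?_, hℓ⟩
    have := (fmul_ne_zero_iff hd h1 e2 e3 ℓ).mp hℓ
    nlinarith [this.1]
  have hVne : V.Nonempty := by
    obtain ⟨a₁, a₂, a₃, heq⟩ := hn
    have hz : (a₁, a₂, a₃) ∈ Zf n₁ n₂ n₃ n := by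
      rw [mem_Zf_iff h1 h2 h3]; exact heq
    have hz2 : (a₁, a₂, a₃) ∈ (Zf n₁ n₂ n₃ n).filter (fun z => len z = len (a₁, a₂, a₃)) := by
      rw [Finset.mem_filter]; exact ⟨hz, rfl⟩
    exact ⟨len (a₁, a₂, a₃), hsub _ (Finset.card_ne_zero_of_mem hz2)⟩
  refine ⟨V.max' hVne, ?_, ?_, ?_⟩
  · have := Finset.mem_filter.mp (V.max'_mem hVne)
    exact this.2
  · intro ℓ hℓ
    exact V.le_max' ℓ (hsub ℓ hℓ)
  · set ℓt := V.max' hVne with hℓt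
    have hvt : fmul n₁ n₂ n₃ n ℓt ≠ 0 := by
      have := Finset.mem_filter.mp (V.max'_mem hVne)
      exact this.2
    obtain ⟨t1, t3, tdvd⟩ := (fmul_ne_zero_iff hd h1 e2 e3 ℓt).mp hvt
    by_contra hcon
    push_neg at hcon
    have hvnext : fmul n₁ n₂ n₃ n (ℓt + d) ≠ 0 := by
      rw [fmul_ne_zero_iff hd h1 e2 e3]
      refine ⟨?_, ?_, ?_⟩
      · calc (ℓt + d) * n₁ = ℓt * n₁ + d * n₁ := by ring
          _ ≤ n := hcon
      · calc n ≤ ℓt * n₃ := t3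
          _ ≤ (ℓt + d) * n₃ := Nat.mul_le_mul_right n₃ (by omega)
      · have : ((ℓt + d : ℕ) : ℤ) * n₂ - n = ((ℓt : ℤ) * n₂ - n) + d * n₂ := by push_cast; ring
        rw [this]
        exact dvd_add tdvd (Dvd.intro _ rfl)
    have := V.le_max' (ℓt + d) (hsub _ hvnext)
    omega

lemma nat_div2_le (m : ℕ) : ((m / 2 : ℕ) : ℚ) ≤ (m : ℚ) / 2 := by
  have h : 2 * (m / 2) ≤ m := by omega
  have : (2 : ℚ) * ((m / 2 : ℕ) : ℚ) ≤ (m : ℚ) := by exact_mod_cast h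
  linarith

lemma nat_div2_ge (m : ℕ) : (m : ℚ) / 2 - 1 / 2 ≤ ((m / 2 : ℕ) : ℚ) := by
  have h : m ≤ 2 * (m / 2) + 1 := by omega
  have : (m : ℚ) ≤ 2 * ((m / 2 : ℕ) : ℚ) + 1 := by exact_mod_cast h
  linarith

lemma closed_sum (K w0 n₁ : ℕ) :
    ∑ j ∈ Finset.range K, (((w0 : ℚ) + (j : ℚ) * n₁) / 2 + 1)
      = (K : ℚ) * w0 / 2 + (n₁ : ℚ) * ((K : ℚ) * ((K : ℚ) - 1)) / 4 + K := by
  have h := sum_range_cast K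
  calc ∑ j ∈ Finset.range K, (((w0 : ℚ) + (j : ℚ) * n₁) / 2 + 1)
      = ∑ j ∈ Finset.range K, (((w0 : ℚ) / 2 + 1) + ((n₁ : ℚ) / 2) * (j : ℚ)) := by
        apply Finset.sum_congr rfl; intro j _; ring
    _ = (K : ℚ) * ((w0 : ℚ) / 2 + 1) + ((n₁ : ℚ) / 2) * ((K : ℚ) * ((K : ℚ) - 1) / 2) := by
        rw [Finset.sum_add_distrib, Finset.sum_const, ← Finset.mul_sum, h]
        simp [nsmul_eq_mul]
        ring
    _ = (K : ℚ) * w0 / 2 + (n₁ : ℚ) * ((K : ℚ) * ((K : ℚ) - 1)) / 4 + K := by ring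

lemma T_bounds {d n₁ n₂ n₃ n : ℕ} (hd : 0 < d) (h1 : 0 < n₁) (e2 : n₂ = n₁ + d)
    (e3 : n₃ = n₂ + d) (hcop : Nat.Coprime d n₂) (hn : inS n₁ n₂ n₃ n) (L : ℕ)
    (hL : n ≤ (L + 1) * n₂) :
    (((Zf n₁ n₂ n₃ n).filter (fun z => L < len z)).card : ℚ)
        ≤ ((n : ℚ) - L * n₁) ^ 2 / (4 * n₁ * d ^ 2) + ((n₁ : ℚ) + 2) * (n + 1)
    ∧ ((L : ℚ) * n₁ ≤ n →
        ((n : ℚ) - L * n₁) ^ 2 / (4 * n₁ * d ^ 2) - ((n₁ : ℚ) + 2) * (n + 1)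
          ≤ (((Zf n₁ n₂ n₃ n).filter (fun z => L < len z)).card : ℚ)) := by
  classical
  have h2 : 0 < n₂ := by omega
  have h3 : 0 < n₃ := by omega
  have hd' : (0 : ℚ) < d := by exact_mod_cast hd
  have h1' : (0 : ℚ) < n₁ := by exact_mod_cast h1
  have hn0 : (0 : ℚ) ≤ n := by positivity
  obtain ⟨ℓt, hvt, hmax, hwt⟩ := inVmax hd h1 e2 e3 hn
  have hTsum : ((Zf n₁ n₂ n₃ n).filter (fun z => L < len z)).card
      = ∑ ℓ ∈ (Finset.range (n + 1)).filter (fun ℓ => L < ℓ), fmul n₁ n₂ n₃ n ℓ :=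
    card_filter_len h1 h2 h3 _
  set T := ((Zf n₁ n₂ n₃ n).filter (fun z => L < len z)).card with hT
  obtain ⟨t1, t3, tdvd⟩ := (fmul_ne_zero_iff hd h1 e2 e3 ℓt).mp hvt
  by_cases hdeg : ℓt ≤ L
  · -- degenerate case : T = 0
    have hT0 : T = 0 := by
      rw [hTsum]
      apply Finset.sum_eq_zero
      intro ℓ hℓ
      rw [Finset.mem_filter] at hℓ
      by_contra hne
      have := hmax ℓ hne
      omega
    rw [hT0]
    constructor
    · push_cast
      positivity
    · intro hLn
      have hub2 : (n : ℚ) - L * n₁ < d * n₁ := by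
        have ha : (n : ℚ) < ℓt * n₁ + d * n₁ := by exact_mod_cast hwt
        have hb : (ℓt : ℚ) * n₁ ≤ L * n₁ := by
          have : (ℓt : ℕ) * n₁ ≤ L * n₁ := Nat.mul_le_mul_right _ hdeg
          exact_mod_cast this
        linarith
      have hlb2 : (0 : ℚ) ≤ (n : ℚ) - L * n₁ := by linarith
      have hkey : ((n : ℚ) - L * n₁) ^ 2 / (4 * n₁ * d ^ 2) ≤ (n₁ : ℚ) / 4 := by
        rw [div_le_iff₀ (by positivity)]
        nlinarith [mul_self_le_mul_self hlb2 hub2.le]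
      push_cast
      nlinarith [hkey]
  · -- main case : L < ℓt
    push_neg at hdeg
    have hℓtn : ℓt ≤ n := by
      have := Nat.le_mul_of_pos_right ℓt h1
      omega
    obtain ⟨k, hk⟩ := tdvd
    have hnle : n ≤ ℓt * n₂ := le_trans hL (Nat.mul_le_mul_right _ (by omega))
    have hk0 : 0 ≤ k := by
      by_contra hneg
      push_neg at hneg
      have hlt : (ℓt : ℤ) * n₂ - n < 0 := by
        rw [hk]; exact mul_neg_of_pos_of_neg (by exact_mod_cast hd) hneg
      have : (ℓt : ℤ) * n₂ < n := by linarith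
      have : (ℓt : ℕ) * n₂ < n := by exact_mod_cast this
      omega
    have hequ0 : n + k.toNat * d = ℓt * n₂ := by
      have hku : (k : ℤ) = k.toNat := by simp [Int.toNat_of_nonneg hk0]
      have : (n : ℤ) + k.toNat * d = ℓt * n₂ := by
        rw [← hku]; linarith [hk]
      exact_mod_cast this
    have hu0ℓ : k.toNat ≤ ℓt := by
      have h' : k.toNat * d ≤ ℓt * d := by
        have hexp : ℓt * n₂ = ℓt * n₁ + ℓt * d := by rw [e2]; ring
        omega
      exact Nat.le_of_mul_le_mul_right h' hd
    obtain ⟨w0, hw0⟩ : ∃ w0, w0 * d + ℓt * n₁ = n := by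
      refine ⟨ℓt - k.toNat, ?_⟩
      have hexp : ℓt * n₂ = ℓt * n₁ + ℓt * d := by rw [e2]; ring
      have hsplit : (ℓt - k.toNat) * d + k.toNat * d = ℓt * d := by
        rw [← add_mul]; congr 1; omega
      omega
    have hw0n₁ : w0 < n₁ := by
      have h' : w0 * d < n₁ * d := by nlinarith [hw0, hwt]
      exact Nat.lt_of_mul_lt_mul_right h'
    -- K and its properties
    have hD1 : 1 ≤ ℓt - L := by omega
    obtain ⟨q, hq⟩ : ∃ q, q = (ℓt - L - 1) / d := ⟨_, rfl⟩
    obtain ⟨K, hK⟩ : ∃ K, K = q + 1 := ⟨_, rfl⟩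
    have hK1 : 1 ≤ K := by omega
    have hKiff : ∀ j : ℕ, j < K ↔ j * d < ℓt - L := by
      intro j
      constructor
      · intro hj
        have hle : j ≤ q := by omega
        rw [hq] at hle
        have := (Nat.le_div_iff_mul_le hd).mp hle
        omega
      · intro hj
        have hle : j * d ≤ ℓt - L - 1 := by omega
        have h2le := (Nat.le_div_iff_mul_le hd).mpr hle
        rw [← hq] at h2le
        omega
    have hKD : (K - 1) * d < ℓt - L := (hKiff (K - 1)).mp (by omega)
    have hDK : ℓt - L ≤ K * d := by
      by_contra hcon
      push_neg at hcon
      have := (hKiff K).mpr hcon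
      omega
    have hKn : K ≤ n + 1 := by
      have h' : K - 1 ≤ (K - 1) * d := Nat.le_mul_of_pos_right _ hd
      omega
    have hcopZ : IsCoprime (d : ℤ) (n₂ : ℤ) := by
      rw [Int.isCoprime_iff_gcd_eq_one]
      simpa [Int.gcd_natCast_natCast] using hcop
    have hEq : ((Finset.range (n + 1)).filter (fun ℓ => L < ℓ)).filter
          (fun ℓ => fmul n₁ n₂ n₃ n ℓ ≠ 0)
        = (Finset.range K).image (fun j => ℓt - j * d) := by
      ext ℓ
      simp only [Finset.mem_filter, Finset.mem_image, Finset.mem_range]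
      constructor
      · rintro ⟨⟨hℓn, hLℓ⟩, hne⟩
        obtain ⟨v1, v3, vdvd⟩ := (fmul_ne_zero_iff hd h1 e2 e3 ℓ).mp hne
        have hℓℓt : ℓ ≤ ℓt := hmax ℓ hne
        have hdvd2 : (d : ℤ) ∣ ((ℓt : ℤ) - ℓ) := by
          apply hcopZ.dvd_of_dvd_mul_right
          have heq2 : ((ℓt : ℤ) - ℓ) * n₂ = ((ℓt : ℤ) * n₂ - n) - ((ℓ : ℤ) * n₂ - n) := by ring
          rw [heq2]
          exact dvd_sub ⟨k, hk⟩ vdvd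
        obtain ⟨c, hc⟩ := hdvd2
        have hc0 : 0 ≤ c := by
          by_contra hneg
          push_neg at hneg
          have h' : (ℓt : ℤ) - ℓ < 0 := by
            rw [hc]; exact mul_neg_of_pos_of_neg (by exact_mod_cast hd) hneg
          have : (ℓt : ℤ) < ℓ := by linarith
          have : ℓt < ℓ := by exact_mod_cast this
          omega
        have hcd : c.toNat * d = ℓt - ℓ := by
          have h' : (ℓt : ℤ) - ℓ = (c.toNat : ℤ) * d := by
            rw [← Int.toNat_of_nonneg hc0] at hc
            linarith [hc]
          have h2' : ((ℓt - ℓ : ℕ) : ℤ) = ((c.toNat * d : ℕ) : ℤ) := by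
            push_cast
            omega
          exact_mod_cast h2'.symm
        exact ⟨c.toNat, (hKiff _).mpr (by omega), by omega⟩
      · rintro ⟨j, hj, rfl⟩
        have hjd : j * d < ℓt - L := (hKiff j).mp hj
        refine ⟨⟨by omega, by omega⟩, ?_⟩
        rw [fmul_ne_zero_iff hd h1 e2 e3]
        refine ⟨?_, ?_, ?_⟩
        · calc (ℓt - j * d) * n₁ ≤ ℓt * n₁ := Nat.mul_le_mul_right _ (by omega)
            _ ≤ n := t1
        · calc n ≤ (L + 1) * n₂ := hL
            _ ≤ (ℓt - j * d) * n₂ := Nat.mul_le_mul_right _ (by omega)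
            _ ≤ (ℓt - j * d) * n₃ := Nat.mul_le_mul_left _ (by omega)
        · have hcast : ((ℓt - j * d : ℕ) : ℤ) = (ℓt : ℤ) - j * d := by
            push_cast [show j * d ≤ ℓt by omega]
            ring
          rw [hcast]
          have heq3 : ((ℓt : ℤ) - j * d) * n₂ - n = ((ℓt : ℤ) * n₂ - n) - j * n₂ * d := by ring
          rw [heq3]
          exact dvd_sub ⟨k, hk⟩ (Dvd.intro_left _ rfl)
    -- term evaluation
    have hterm : ∀ j, j < K → fmul n₁ n₂ n₃ n (ℓt - j * d) = (w0 + j * n₁) / 2 + 1 := by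
      intro j hj
      have hjd : j * d < ℓt - L := (hKiff j).mp hj
      have hjdℓ : j * d ≤ ℓt := by omega
      have hwj : (w0 + j * n₁) * d + (ℓt - j * d) * n₁ = n := by
        have hw0' : (w0 : ℤ) * d + ℓt * n₁ = n := by exact_mod_cast hw0
        have hZ : ((w0 : ℤ) + j * n₁) * d + ((ℓt : ℤ) - j * d) * n₁ = n := by
          linear_combination hw0'
        have hcast : ((ℓt - j * d : ℕ) : ℤ) = (ℓt : ℤ) - j * d := by
          push_cast [hjdℓ]; ring
        exact_mod_cast (by rw [hcast]; exact hZ :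
          ((w0 + j * n₁ : ℕ) : ℤ) * d + ((ℓt - j * d : ℕ) : ℤ) * n₁ = n)
      have hnℓ2 : n ≤ (ℓt - j * d) * n₂ := le_trans hL (Nat.mul_le_mul_right _ (by omega))
      have hwjℓ : w0 + j * n₁ ≤ ℓt - j * d := by
        have hexp : (ℓt - j * d) * n₂ = (ℓt - j * d) * n₁ + (ℓt - j * d) * d := by
          rw [e2]; ring
        have h' : (w0 + j * n₁) * d ≤ (ℓt - j * d) * d := by omega
        exact Nat.le_of_mul_le_mul_right h' hd
      have hu : n + ((ℓt - j * d) - (w0 + j * n₁)) * d = (ℓt - j * d) * n₂ := by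
        have hexp : (ℓt - j * d) * n₂ = (ℓt - j * d) * n₁ + (ℓt - j * d) * d := by
          rw [e2]; ring
        have hsplit : ((ℓt - j * d) - (w0 + j * n₁)) * d + (w0 + j * n₁) * d
            = (ℓt - j * d) * d := by
          rw [← add_mul]; congr 1; omega
        omega
      rw [fmul_right hd h1 e2 e3 hu (by omega)]
      have hx : (ℓt - j * d) - ((ℓt - j * d) - (w0 + j * n₁)) = w0 + j * n₁ := by omega
      rw [hx]
    -- T as explicit sum
    have hinj : ∀ x ∈ Finset.range K, ∀ y ∈ Finset.range K,
        ℓt - x * d = ℓt - y * d → x = y := by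
      intro i hi j hj heq
      rw [Finset.mem_range] at hi hj
      have hi' := (hKiff i).mp hi
      have hj' := (hKiff j).mp hj
      have : i * d = j * d := by omega
      exact Nat.eq_of_mul_eq_mul_right hd this
    have hTsum2 : T = ∑ j ∈ Finset.range K, ((w0 + j * n₁) / 2 + 1) := by
      rw [hTsum, ← Finset.sum_filter_ne_zero, hEq, Finset.sum_image hinj]
      exact Finset.sum_congr rfl (fun j hj => hterm j (Finset.mem_range.mp hj))
    -- bounds in ℚ
    have hTub : (T : ℚ) ≤ (K : ℚ) * w0 / 2 + (n₁ : ℚ) * ((K : ℚ) * ((K : ℚ) - 1)) / 4 + K := by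
      rw [hTsum2]
      push_cast
      rw [← closed_sum K w0 n₁]
      apply Finset.sum_le_sum
      intro j _
      have := nat_div2_le (w0 + j * n₁)
      push_cast at this ⊢
      linarith
    have hTlb : (K : ℚ) * w0 / 2 + (n₁ : ℚ) * ((K : ℚ) * ((K : ℚ) - 1)) / 4 ≤ (T : ℚ) := by
      rw [hTsum2]
      push_cast
      have hstep : ∀ j ∈ Finset.range K,
          ((w0 : ℚ) + (j : ℚ) * n₁) / 2 + 1 - 1 / 2 ≤ (((w0 + j * n₁) / 2 : ℕ) : ℚ) + 1 := by
        intro j _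
        have := nat_div2_ge (w0 + j * n₁)
        push_cast at this ⊢
        linarith
      have hsum := Finset.sum_le_sum hstep
      rw [Finset.sum_sub_distrib, closed_sum K w0 n₁] at hsum
      simp only [Finset.sum_const, Finset.card_range, nsmul_eq_mul] at hsum
      push_cast at hsum ⊢
      have hK0 : (0 : ℚ) ≤ (K : ℚ) := by positivity
      linarith
    -- cast facts
    have hKD' : ((K : ℚ) - 1) * d < ((ℓt - L : ℕ) : ℚ) := by
      have hcst : ((K - 1 : ℕ) : ℚ) * d < ((ℓt - L : ℕ) : ℚ) := by exact_mod_cast hKD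
      have hc : ((K - 1 : ℕ) : ℚ) = (K : ℚ) - 1 := by
        push_cast [hK1]
        ring
      rw [hc] at hcst
      exact hcst
    have hDK' : ((ℓt - L : ℕ) : ℚ) ≤ K * d := by exact_mod_cast hDK
    have hW : (n : ℚ) - L * n₁ = (w0 : ℚ) * d + ((ℓt - L : ℕ) : ℚ) * n₁ := by
      have hnat : w0 * d + (ℓt - L) * n₁ + L * n₁ = n := by
        have hsplit : (ℓt - L) * n₁ + L * n₁ = ℓt * n₁ := by
          rw [← add_mul]; congr 1; omega
        omega
      have hcst := congrArg (fun x : ℕ => (x : ℚ)) hnat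
      push_cast at hcst
      linarith
    have hw0q : (w0 : ℚ) + 1 ≤ n₁ := by exact_mod_cast hw0n₁
    have hKq : (K : ℚ) ≤ n + 1 := by exact_mod_cast hKn
    have hK1q : (1 : ℚ) ≤ K := by exact_mod_cast hK1
    have hw0q0 : (0 : ℚ) ≤ w0 := by positivity
    constructor
    · -- upper bound
      have hb : ((w0 : ℚ) + ((K : ℚ) - 1) * n₁) * d ≤ (w0 : ℚ) * d + ((ℓt - L : ℕ) : ℚ) * n₁ := by
        nlinarith [hKD', h1']
      have ha : (0 : ℚ) ≤ ((w0 : ℚ) + ((K : ℚ) - 1) * n₁) * d := by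
        apply mul_nonneg _ hd'.le
        nlinarith
      have hsq : (((w0 : ℚ) + ((K : ℚ) - 1) * n₁) * d) ^ 2
          ≤ ((w0 : ℚ) * d + ((ℓt - L : ℕ) : ℚ) * n₁) ^ 2 := pow_le_pow_left₀ ha hb 2
      have he1 : ((w0 : ℚ) + ((K : ℚ) - 1) * n₁) ^ 2 / (4 * n₁)
          ≤ ((n : ℚ) - L * n₁) ^ 2 / (4 * n₁ * d ^ 2) := by
        rw [hW, div_le_div_iff₀ (by positivity) (by positivity)]
        nlinarith [hsq]
      have hpoly : ((K : ℚ) * w0 / 2 + (n₁ : ℚ) * ((K : ℚ) * ((K : ℚ) - 1)) / 4 + K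
            - ((n₁ : ℚ) + 2) * (n + 1)) * (4 * n₁)
          ≤ ((w0 : ℚ) + ((K : ℚ) - 1) * n₁) ^ 2 := by
        nlinarith [hw0q, hKq, hK1q, hw0q0, h1', hn0,
          mul_le_mul_of_nonneg_right hKq h1'.le,
          mul_le_mul_of_nonneg_right hw0q h1'.le,
          mul_le_mul_of_nonneg_right (sub_le_iff_le_add.mpr hKq) (mul_pos h1' h1').le]
      have := (le_div_iff₀ (by positivity : (0:ℚ) < 4 * n₁)).mpr hpoly
      linarith [hTub, he1, this]
    · -- lower bound
      intro hLn
      have hb : (w0 : ℚ) * d + ((ℓt - L : ℕ) : ℚ) * n₁ ≤ ((w0 : ℚ) + (K : ℚ) * n₁) * d := by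
        nlinarith [hDK', h1']
      have ha : (0 : ℚ) ≤ (w0 : ℚ) * d + ((ℓt - L : ℕ) : ℚ) * n₁ := by
        rw [← hW]; linarith [hLn]
      have hsq : ((w0 : ℚ) * d + ((ℓt - L : ℕ) : ℚ) * n₁) ^ 2
          ≤ (((w0 : ℚ) + (K : ℚ) * n₁) * d) ^ 2 := pow_le_pow_left₀ ha hb 2
      have he1 : ((n : ℚ) - L * n₁) ^ 2 / (4 * n₁ * d ^ 2)
          ≤ ((w0 : ℚ) + (K : ℚ) * n₁) ^ 2 / (4 * n₁) := by
        rw [hW, div_le_div_iff₀ (by positivity) (by positivity)]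
        nlinarith [hsq]
      have hpoly : ((w0 : ℚ) + (K : ℚ) * n₁) ^ 2
          ≤ ((K : ℚ) * w0 / 2 + (n₁ : ℚ) * ((K : ℚ) * ((K : ℚ) - 1)) / 4
            + ((n₁ : ℚ) + 2) * (n + 1)) * (4 * n₁) := by
        nlinarith [hw0q, hKq, hK1q, hw0q0, h1', hn0,
          mul_le_mul_of_nonneg_right hKq (mul_pos h1' h1').le,
          mul_le_mul_of_nonneg_right hw0q h1'.le]
      have := (div_le_iff₀ (by positivity : (0:ℚ) < 4 * n₁)).mpr hpoly
      linarith [hTlb, he1, this]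

lemma inVmin {d n₁ n₂ n₃ n : ℕ} (hd : 0 < d) (h1 : 0 < n₁) (e2 : n₂ = n₁ + d)
    (e3 : n₃ = n₂ + d) (hn : inS n₁ n₂ n₃ n) :
    ∃ ℓb : ℕ, fmul n₁ n₂ n₃ n ℓb ≠ 0 ∧ (∀ ℓ, fmul n₁ n₂ n₃ n ℓ ≠ 0 → ℓb ≤ ℓ) ∧
      ℓb * n₃ < n + d * n₃ := by
  classical
  have h2 : 0 < n₂ := by omega
  have h3 : 0 < n₃ := by omega
  set V := (Finset.range (n + 1)).filter (fun ℓ => fmul n₁ n₂ n₃ n ℓ ≠ 0) with hV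
  have hsub : ∀ ℓ, fmul n₁ n₂ n₃ n ℓ ≠ 0 → ℓ ∈ V := by
    intro ℓ hℓ
    rw [hV, Finset.mem_filter, Finset.mem_range]
    refine ⟨?_, hℓ⟩
    have := (fmul_ne_zero_iff hd h1 e2 e3 ℓ).mp hℓ
    nlinarith [this.1]
  have hVne : V.Nonempty := by
    obtain ⟨a₁, a₂, a₃, heq⟩ := hn
    have hz : (a₁, a₂, a₃) ∈ Zf n₁ n₂ n₃ n := by
      rw [mem_Zf_iff h1 h2 h3]; exact heq
    have hz2 : (a₁, a₂, a₃) ∈ (Zf n₁ n₂ n₃ n).filter (fun z => len z = len (a₁, a₂, a₃)) := by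
      rw [Finset.mem_filter]; exact ⟨hz, rfl⟩
    exact ⟨len (a₁, a₂, a₃), hsub _ (Finset.card_ne_zero_of_mem hz2)⟩
  have hvb : fmul n₁ n₂ n₃ n (V.min' hVne) ≠ 0 := by
    have := Finset.mem_filter.mp (V.min'_mem hVne)
    exact this.2
  refine ⟨V.min' hVne, hvb, ?_, ?_⟩
  · intro ℓ hℓ
    exact V.min'_le ℓ (hsub ℓ hℓ)
  · set ℓb := V.min' hVne with hℓb
    obtain ⟨t1, t3, tdvd⟩ := (fmul_ne_zero_iff hd h1 e2 e3 ℓb).mp hvb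
    by_contra hcon
    push_neg at hcon
    have hdb : d ≤ ℓb := by
      have : d * n₃ ≤ ℓb * n₃ := by omega
      exact Nat.le_of_mul_le_mul_right (by omega : d * n₃ ≤ ℓb * n₃) h3
    have hvprev : fmul n₁ n₂ n₃ n (ℓb - d) ≠ 0 := by
      rw [fmul_ne_zero_iff hd h1 e2 e3]
      refine ⟨?_, ?_, ?_⟩
      · calc (ℓb - d) * n₁ ≤ ℓb * n₁ := Nat.mul_le_mul_right _ (by omega)
          _ ≤ n := t1
      · have hsplit : (ℓb - d) * n₃ + d * n₃ = ℓb * n₃ := by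
          rw [← add_mul]; congr 1; omega
        omega
      · have hcast : ((ℓb - d : ℕ) : ℤ) = (ℓb : ℤ) - d := by
          push_cast [hdb]; ring
        rw [hcast]
        have heq3 : ((ℓb : ℤ) - d) * n₂ - n = ((ℓb : ℤ) * n₂ - n) - n₂ * d := by ring
        rw [heq3]
        exact dvd_sub tdvd (Dvd.intro_left _ rfl)
    have := V.min'_le _ (hsub _ hvprev)
    omega

lemma T2_bounds {d n₁ n₂ n₃ n : ℕ} (hd : 0 < d) (h1 : 0 < n₁) (e2 : n₂ = n₁ + d)
    (e3 : n₃ = n₂ + d) (hcop : Nat.Coprime d n₂) (hn : inS n₁ n₂ n₃ n) (L : ℕ)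
    (hL : L * n₂ ≤ n + n₂) (hLn : L ≤ n + 1) :
    (((Zf n₁ n₂ n₃ n).filter (fun z => len z < L)).card : ℚ)
        ≤ ((L : ℚ) * n₃ - n) ^ 2 / (4 * n₃ * d ^ 2) + ((n₃ : ℚ) + 2) * (n + 1)
    ∧ ((n : ℚ) ≤ L * n₃ →
        ((L : ℚ) * n₃ - n) ^ 2 / (4 * n₃ * d ^ 2) - ((n₃ : ℚ) + 2) * (n + 1)
          ≤ (((Zf n₁ n₂ n₃ n).filter (fun z => len z < L)).card : ℚ)) := by
  classical
  have h2 : 0 < n₂ := by omega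
  have h3 : 0 < n₃ := by omega
  have hd' : (0 : ℚ) < d := by exact_mod_cast hd
  have h3' : (0 : ℚ) < n₃ := by exact_mod_cast h3
  have hn0 : (0 : ℚ) ≤ n := by positivity
  obtain ⟨ℓb, hvb, hmin, hwb⟩ := inVmin hd h1 e2 e3 hn
  have hTsum : ((Zf n₁ n₂ n₃ n).filter (fun z => len z < L)).card
      = ∑ ℓ ∈ (Finset.range (n + 1)).filter (fun ℓ => ℓ < L), fmul n₁ n₂ n₃ n ℓ :=
    card_filter_len h1 h2 h3 (fun x => x < L)
  set T := ((Zf n₁ n₂ n₃ n).filter (fun z => len z < L)).card with hT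
  obtain ⟨t1, t3, tdvd⟩ := (fmul_ne_zero_iff hd h1 e2 e3 ℓb).mp hvb
  by_cases hdeg : L ≤ ℓb
  · -- degenerate case : T = 0
    have hT0 : T = 0 := by
      rw [hTsum]
      apply Finset.sum_eq_zero
      intro ℓ hℓ
      rw [Finset.mem_filter] at hℓ
      by_contra hne
      have := hmin ℓ hne
      omega
    rw [hT0]
    constructor
    · push_cast
      positivity
    · intro hLn3
      have hub2 : (L : ℚ) * n₃ - n < d * n₃ := by
        have ha : (ℓb : ℚ) * n₃ < n + d * n₃ := by exact_mod_cast hwb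
        have hb : (L : ℚ) * n₃ ≤ ℓb * n₃ := by
          have : (L : ℕ) * n₃ ≤ ℓb * n₃ := Nat.mul_le_mul_right _ hdeg
          exact_mod_cast this
        linarith
      have hlb2 : (0 : ℚ) ≤ (L : ℚ) * n₃ - n := by linarith
      have hkey : ((L : ℚ) * n₃ - n) ^ 2 / (4 * n₃ * d ^ 2) ≤ (n₃ : ℚ) / 4 := by
        rw [div_le_iff₀ (by positivity)]
        nlinarith [mul_self_le_mul_self hlb2 hub2.le]
      push_cast
      nlinarith [hkey]
  · -- main case : ℓb < L
    push_neg at hdeg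
    have hℓbn2 : ℓb * n₂ ≤ n := by
      have : ℓb + 1 ≤ L := hdeg
      have h' : (ℓb + 1) * n₂ ≤ L * n₂ := Nat.mul_le_mul_right _ this
      have hexp : (ℓb + 1) * n₂ = ℓb * n₂ + n₂ := by ring
      omega
    obtain ⟨k, hk⟩ := tdvd
    have hk0 : k ≤ 0 := by
      by_contra hneg
      push_neg at hneg
      have hlt : (0 : ℤ) < (ℓb : ℤ) * n₂ - n := by
        rw [hk]; exact mul_pos (by exact_mod_cast hd) hneg
      have : (n : ℤ) < ℓb * n₂ := by linarith
      have : n < ℓb * n₂ := by exact_mod_cast this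
      omega
    have hequ0 : ℓb * n₂ + (-k).toNat * d = n := by
      have hku : ((-k).toNat : ℤ) = -k := Int.toNat_of_nonneg (by omega)
      have : (ℓb : ℤ) * n₂ + (-k).toNat * d = n := by
        rw [hku]; linarith [hk]
      exact_mod_cast this
    obtain ⟨v0, hv0⟩ : ∃ v0, v0 * d + n = ℓb * n₃ := by
      refine ⟨ℓb - (-k).toNat, ?_⟩
      have huℓ : (-k).toNat ≤ ℓb := by
        have h' : (-k).toNat * d ≤ ℓb * d := by
          have hexp : ℓb * n₃ = ℓb * n₂ + ℓb * d := by rw [e3]; ring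
          have : n ≤ ℓb * n₃ := t3
          omega
        exact Nat.le_of_mul_le_mul_right h' hd
      have hexp : ℓb * n₃ = ℓb * n₂ + ℓb * d := by rw [e3]; ring
      have hsplit : (ℓb - (-k).toNat) * d + (-k).toNat * d = ℓb * d := by
        rw [← add_mul]; congr 1; omega
      omega
    have hv0n₃ : v0 < n₃ := by
      have h' : v0 * d < n₃ * d := by nlinarith [hv0, hwb]
      exact Nat.lt_of_mul_lt_mul_right h'
    -- K and its properties
    have hD1 : 1 ≤ L - ℓb := by omega
    obtain ⟨q, hq⟩ : ∃ q, q = (L - ℓb - 1) / d := ⟨_, rfl⟩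
    obtain ⟨K, hK⟩ : ∃ K, K = q + 1 := ⟨_, rfl⟩
    have hK1 : 1 ≤ K := by omega
    have hKiff : ∀ j : ℕ, j < K ↔ j * d < L - ℓb := by
      intro j
      constructor
      · intro hj
        have hle : j ≤ q := by omega
        rw [hq] at hle
        have := (Nat.le_div_iff_mul_le hd).mp hle
        omega
      · intro hj
        have hle : j * d ≤ L - ℓb - 1 := by omega
        have h2le := (Nat.le_div_iff_mul_le hd).mpr hle
        rw [← hq] at h2le
        omega
    have hKD : (K - 1) * d < L - ℓb := (hKiff (K - 1)).mp (by omega)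
    have hDK : L - ℓb ≤ K * d := by
      by_contra hcon
      push_neg at hcon
      have := (hKiff K).mpr hcon
      omega
    have hKn : K ≤ n + 1 := by
      have h' : K - 1 ≤ (K - 1) * d := Nat.le_mul_of_pos_right _ hd
      omega
    have hcopZ : IsCoprime (d : ℤ) (n₂ : ℤ) := by
      rw [Int.isCoprime_iff_gcd_eq_one]
      simpa [Int.gcd_natCast_natCast] using hcop
    have hEq : ((Finset.range (n + 1)).filter (fun ℓ => ℓ < L)).filter
          (fun ℓ => fmul n₁ n₂ n₃ n ℓ ≠ 0)
        = (Finset.range K).image (fun j => ℓb + j * d) := by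
      ext ℓ
      simp only [Finset.mem_filter, Finset.mem_image, Finset.mem_range]
      constructor
      · rintro ⟨⟨hℓn, hLℓ⟩, hne⟩
        obtain ⟨v1, v3, vdvd⟩ := (fmul_ne_zero_iff hd h1 e2 e3 ℓ).mp hne
        have hℓℓb : ℓb ≤ ℓ := hmin ℓ hne
        have hdvd2 : (d : ℤ) ∣ ((ℓ : ℤ) - ℓb) := by
          apply hcopZ.dvd_of_dvd_mul_right
          have heq2 : ((ℓ : ℤ) - ℓb) * n₂ = ((ℓ : ℤ) * n₂ - n) - ((ℓb : ℤ) * n₂ - n) := by ring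
          rw [heq2]
          exact dvd_sub vdvd ⟨k, hk⟩
        obtain ⟨c, hc⟩ := hdvd2
        have hc0 : 0 ≤ c := by
          by_contra hneg
          push_neg at hneg
          have h' : (ℓ : ℤ) - ℓb < 0 := by
            rw [hc]; exact mul_neg_of_pos_of_neg (by exact_mod_cast hd) hneg
          have : (ℓ : ℤ) < ℓb := by linarith
          have : ℓ < ℓb := by exact_mod_cast this
          omega
        have hcd : c.toNat * d = ℓ - ℓb := by
          have h' : (ℓ : ℤ) - ℓb = (c.toNat : ℤ) * d := by
            rw [← Int.toNat_of_nonneg hc0] at hc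
            linarith [hc]
          have h2' : ((ℓ - ℓb : ℕ) : ℤ) = ((c.toNat * d : ℕ) : ℤ) := by
            push_cast
            omega
          exact_mod_cast h2'.symm
        exact ⟨c.toNat, (hKiff _).mpr (by omega), by omega⟩
      · rintro ⟨j, hj, rfl⟩
        have hjd : j * d < L - ℓb := (hKiff j).mp hj
        have hℓL : ℓb + j * d < L := by omega
        refine ⟨⟨by omega, hℓL⟩, ?_⟩
        rw [fmul_ne_zero_iff hd h1 e2 e3]
        have hn2 : (ℓb + j * d) * n₂ ≤ n := by
          have h' : (ℓb + j * d + 1) * n₂ ≤ L * n₂ := Nat.mul_le_mul_right _ (by omega)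
          have hexp : (ℓb + j * d + 1) * n₂ = (ℓb + j * d) * n₂ + n₂ := by ring
          omega
        refine ⟨?_, ?_, ?_⟩
        · calc (ℓb + j * d) * n₁ ≤ (ℓb + j * d) * n₂ := Nat.mul_le_mul_left _ (by omega)
            _ ≤ n := hn2
        · calc n ≤ ℓb * n₃ := t3
            _ ≤ (ℓb + j * d) * n₃ := Nat.mul_le_mul_right _ (by omega)
        · have heq3 : ((ℓb + j * d : ℕ) : ℤ) * n₂ - n
              = ((ℓb : ℤ) * n₂ - n) + j * n₂ * d := by push_cast; ring
          rw [heq3]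
          exact dvd_add ⟨k, hk⟩ (Dvd.intro_left _ rfl)
    -- term evaluation
    have hterm : ∀ j, j < K → fmul n₁ n₂ n₃ n (ℓb + j * d) = (v0 + j * n₃) / 2 + 1 := by
      intro j hj
      have hjd : j * d < L - ℓb := (hKiff j).mp hj
      have hn2 : (ℓb + j * d) * n₂ ≤ n := by
        have h' : (ℓb + j * d + 1) * n₂ ≤ L * n₂ := Nat.mul_le_mul_right _ (by omega)
        have hexp : (ℓb + j * d + 1) * n₂ = (ℓb + j * d) * n₂ + n₂ := by ring
        omega
      have hvj : (v0 + j * n₃) * d + n = (ℓb + j * d) * n₃ := by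
        have hv0' : (v0 : ℤ) * d + n = ℓb * n₃ := by exact_mod_cast hv0
        have hZ : ((v0 : ℤ) + j * n₃) * d + n = ((ℓb : ℤ) + j * d) * n₃ := by
          linear_combination hv0'
        exact_mod_cast hZ
      have hvjℓ : v0 + j * n₃ ≤ ℓb + j * d := by
        have hexp : (ℓb + j * d) * n₃ = (ℓb + j * d) * n₂ + (ℓb + j * d) * d := by
          rw [e3]; ring
        have h' : (v0 + j * n₃) * d ≤ (ℓb + j * d) * d := by omega
        exact Nat.le_of_mul_le_mul_right h' hd
      have hu : (ℓb + j * d) * n₂ + ((ℓb + j * d) - (v0 + j * n₃)) * d = n := by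
        have hexp : (ℓb + j * d) * n₃ = (ℓb + j * d) * n₂ + (ℓb + j * d) * d := by
          rw [e3]; ring
        have hsplit : ((ℓb + j * d) - (v0 + j * n₃)) * d + (v0 + j * n₃) * d
            = (ℓb + j * d) * d := by
          rw [← add_mul]; congr 1; omega
        omega
      rw [fmul_left hd h1 e2 e3 hu (by omega)]
      have hx : (ℓb + j * d) - ((ℓb + j * d) - (v0 + j * n₃)) = v0 + j * n₃ := by omega
      rw [hx]
    -- T as explicit sum
    have hinj : ∀ x ∈ Finset.range K, ∀ y ∈ Finset.range K,
        ℓb + x * d = ℓb + y * d → x = y := by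
      intro i _ j _ heq
      have : i * d = j * d := by omega
      exact Nat.eq_of_mul_eq_mul_right hd this
    have hTsum2 : T = ∑ j ∈ Finset.range K, ((v0 + j * n₃) / 2 + 1) := by
      rw [hTsum, ← Finset.sum_filter_ne_zero, hEq, Finset.sum_image hinj]
      exact Finset.sum_congr rfl (fun j hj => hterm j (Finset.mem_range.mp hj))
    -- bounds in ℚ
    have hTub : (T : ℚ) ≤ (K : ℚ) * v0 / 2 + (n₃ : ℚ) * ((K : ℚ) * ((K : ℚ) - 1)) / 4 + K := by
      rw [hTsum2]
      push_cast
      rw [← closed_sum K v0 n₃]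
      apply Finset.sum_le_sum
      intro j _
      have := nat_div2_le (v0 + j * n₃)
      push_cast at this ⊢
      linarith
    have hTlb : (K : ℚ) * v0 / 2 + (n₃ : ℚ) * ((K : ℚ) * ((K : ℚ) - 1)) / 4 ≤ (T : ℚ) := by
      rw [hTsum2]
      push_cast
      have hstep : ∀ j ∈ Finset.range K,
          ((v0 : ℚ) + (j : ℚ) * n₃) / 2 + 1 - 1 / 2 ≤ (((v0 + j * n₃) / 2 : ℕ) : ℚ) + 1 := by
        intro j _
        have := nat_div2_ge (v0 + j * n₃)
        push_cast at this ⊢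
        linarith
      have hsum := Finset.sum_le_sum hstep
      rw [Finset.sum_sub_distrib, closed_sum K v0 n₃] at hsum
      simp only [Finset.sum_const, Finset.card_range, nsmul_eq_mul] at hsum
      push_cast at hsum ⊢
      have hK0 : (0 : ℚ) ≤ (K : ℚ) := by positivity
      linarith
    -- cast facts
    have hKD' : ((K : ℚ) - 1) * d < ((L - ℓb : ℕ) : ℚ) := by
      have hcst : ((K - 1 : ℕ) : ℚ) * d < ((L - ℓb : ℕ) : ℚ) := by exact_mod_cast hKD
      have hc : ((K - 1 : ℕ) : ℚ) = (K : ℚ) - 1 := by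
        push_cast [hK1]
        ring
      rw [hc] at hcst
      exact hcst
    have hDK' : ((L - ℓb : ℕ) : ℚ) ≤ K * d := by exact_mod_cast hDK
    have hW : (L : ℚ) * n₃ - n = (v0 : ℚ) * d + ((L - ℓb : ℕ) : ℚ) * n₃ := by
      have hnat : v0 * d + (L - ℓb) * n₃ + n = L * n₃ := by
        have hsplit : (L - ℓb) * n₃ + ℓb * n₃ = L * n₃ := by
          rw [← add_mul]; congr 1; omega
        omega
      have hcst := congrArg (fun x : ℕ => (x : ℚ)) hnat
      push_cast at hcst
      linarith
    have hv0q : (v0 : ℚ) + 1 ≤ n₃ := by exact_mod_cast hv0n₃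
    have hKq : (K : ℚ) ≤ n + 1 := by exact_mod_cast hKn
    have hK1q : (1 : ℚ) ≤ K := by exact_mod_cast hK1
    have hv0q0 : (0 : ℚ) ≤ v0 := by positivity
    constructor
    · -- upper bound
      have hb : ((v0 : ℚ) + ((K : ℚ) - 1) * n₃) * d ≤ (v0 : ℚ) * d + ((L - ℓb : ℕ) : ℚ) * n₃ := by
        nlinarith [hKD', h3']
      have ha : (0 : ℚ) ≤ ((v0 : ℚ) + ((K : ℚ) - 1) * n₃) * d := by
        apply mul_nonneg _ hd'.le
        nlinarith
      have hsq : (((v0 : ℚ) + ((K : ℚ) - 1) * n₃) * d) ^ 2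
          ≤ ((v0 : ℚ) * d + ((L - ℓb : ℕ) : ℚ) * n₃) ^ 2 := pow_le_pow_left₀ ha hb 2
      have he1 : ((v0 : ℚ) + ((K : ℚ) - 1) * n₃) ^ 2 / (4 * n₃)
          ≤ ((L : ℚ) * n₃ - n) ^ 2 / (4 * n₃ * d ^ 2) := by
        rw [hW, div_le_div_iff₀ (by positivity) (by positivity)]
        nlinarith [hsq]
      have hpoly : ((K : ℚ) * v0 / 2 + (n₃ : ℚ) * ((K : ℚ) * ((K : ℚ) - 1)) / 4 + K
            - ((n₃ : ℚ) + 2) * (n + 1)) * (4 * n₃)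
          ≤ ((v0 : ℚ) + ((K : ℚ) - 1) * n₃) ^ 2 := by
        nlinarith [hv0q, hKq, hK1q, hv0q0, h3', hn0,
          mul_le_mul_of_nonneg_right hKq h3'.le,
          mul_le_mul_of_nonneg_right hv0q h3'.le,
          mul_le_mul_of_nonneg_right (sub_le_iff_le_add.mpr hKq) (mul_pos h3' h3').le]
      have := (le_div_iff₀ (by positivity : (0:ℚ) < 4 * n₃)).mpr hpoly
      linarith [hTub, he1, this]
    · -- lower bound
      intro hLn3
      have hb : (v0 : ℚ) * d + ((L - ℓb : ℕ) : ℚ) * n₃ ≤ ((v0 : ℚ) + (K : ℚ) * n₃) * d := by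
        nlinarith [hDK', h3']
      have ha : (0 : ℚ) ≤ (v0 : ℚ) * d + ((L - ℓb : ℕ) : ℚ) * n₃ := by
        rw [← hW]; linarith [hLn3]
      have hsq : ((v0 : ℚ) * d + ((L - ℓb : ℕ) : ℚ) * n₃) ^ 2
          ≤ (((v0 : ℚ) + (K : ℚ) * n₃) * d) ^ 2 := pow_le_pow_left₀ ha hb 2
      have he1 : ((L : ℚ) * n₃ - n) ^ 2 / (4 * n₃ * d ^ 2)
          ≤ ((v0 : ℚ) + (K : ℚ) * n₃) ^ 2 / (4 * n₃) := by
        rw [hW, div_le_div_iff₀ (by positivity) (by positivity)]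
        nlinarith [hsq]
      have hpoly : ((v0 : ℚ) + (K : ℚ) * n₃) ^ 2
          ≤ ((K : ℚ) * v0 / 2 + (n₃ : ℚ) * ((K : ℚ) * ((K : ℚ) - 1)) / 4
            + ((n₃ : ℚ) + 2) * (n + 1)) * (4 * n₃) := by
        nlinarith [hv0q, hKq, hK1q, hv0q0, h3', hn0,
          mul_le_mul_of_nonneg_right hKq (mul_pos h3' h3').le,
          mul_le_mul_of_nonneg_right hv0q h3'.le]
      have := (div_le_iff₀ (by positivity : (0:ℚ) < 4 * n₃)).mpr hpoly
      linarith [hTlb, he1, this]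

lemma sorted_getD_gt {l : List ℕ} (hs : l.Pairwise (· ≤ ·)) {i L : ℕ} (hi : i < l.length)
    (hcount : l.countP (fun x => decide (x ≤ L)) ≤ i) : L < l.getD i 0 := by
  by_contra hcon
  push_neg at hcon
  rw [List.getD_eq_getElem l 0 hi] at hcon
  have htake : ∀ x ∈ l.take (i + 1), x ≤ L := by
    intro x hx
    rw [List.mem_iff_getElem] at hx
    obtain ⟨j, hj, hxe⟩ := hx
    rw [List.length_take] at hj
    have hjl : j < l.length := lt_of_lt_of_le (lt_min_iff.mp hj).2 le_rfl
    rw [List.getElem_take] at hxe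
    subst hxe
    have hji : j ≤ i := by omega
    rcases eq_or_lt_of_le hji with h | h
    · subst h; exact hcon
    · have := List.pairwise_iff_get.mp hs ⟨j, hjl⟩ ⟨i, hi⟩ h
      simp only [List.get_eq_getElem] at this
      exact le_trans this hcon
  have hc1 : (l.take (i + 1)).countP (fun x => decide (x ≤ L)) = (l.take (i+1)).length := by
    rw [List.countP_eq_length]
    intro a ha
    simpa using htake a ha
  have hlen : (l.take (i + 1)).length = i + 1 := by
    rw [List.length_take]
    omega
  have hsplit := List.countP_append (p := fun x => decide (x ≤ L)) (l₁ := l.take (i+1)) (l₂ := l.drop (i+1))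
  rw [List.take_append_drop] at hsplit
  omega

lemma sorted_getD_le {l : List ℕ} (hs : l.Pairwise (· ≤ ·)) {i L : ℕ} (hi : i < l.length)
    (hcount : i < l.countP (fun x => decide (x ≤ L))) : l.getD i 0 ≤ L := by
  by_contra hcon
  push_neg at hcon
  rw [List.getD_eq_getElem l 0 hi] at hcon
  have hdrop : ∀ x ∈ l.drop i, ¬ (x ≤ L) := by
    intro x hx
    rw [List.mem_iff_getElem] at hx
    obtain ⟨j, hj, hxe⟩ := hx
    rw [List.length_drop] at hj
    rw [List.getElem_drop] at hxe
    subst hxe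
    rcases Nat.eq_zero_or_pos j with h | h
    · subst h; simpa using hcon
    · have hlt : i < i + j := by omega
      have := List.pairwise_iff_get.mp hs ⟨i, hi⟩ ⟨i + j, by omega⟩ hlt
      simp only [List.get_eq_getElem] at this
      omega
  have hc0 : (l.drop i).countP (fun x => decide (x ≤ L)) = 0 := by
    rw [List.countP_eq_zero]
    intro a ha
    simpa using hdrop a ha
  have hsplit := List.countP_append (p := fun x => decide (x ≤ L)) (l₁ := l.take i) (l₂ := l.drop i)
  rw [List.take_append_drop] at hsplit
  have : (l.take i).countP (fun x => decide (x ≤ L)) ≤ (l.take i).length :=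
    List.countP_le_length
  rw [List.length_take] at this
  omega


lemma length_sortedLengths (n₁ n₂ n₃ n : ℕ) :
    (sortedLengths n₁ n₂ n₃ n).length = (Zf n₁ n₂ n₃ n).card := by
  rw [sortedLengths, Multiset.length_sort, Multiset.card_map]
  rfl

lemma countP_sortedLengths (n₁ n₂ n₃ n L : ℕ) :
    (sortedLengths n₁ n₂ n₃ n).countP (fun x => decide (x ≤ L))
      = ((Zf n₁ n₂ n₃ n).filter (fun z => len z ≤ L)).card := by
  have h1 : (sortedLengths n₁ n₂ n₃ n).countP (fun x => decide (x ≤ L))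
      = Multiset.countP (fun x => x ≤ L) (↑(sortedLengths n₁ n₂ n₃ n) : Multiset ℕ) := by
    rw [Multiset.coe_countP]
  rw [h1, sortedLengths, Multiset.sort_eq, Multiset.countP_map]
  rw [Finset.card_filter]
  simp [Finset.sum_boole, Multiset.countP_eq_card_filter]
  rfl

lemma medianLen_bounds {n₁ n₂ n₃ n L₁ L₂ : ℕ}
    (hA : 2 * ((Zf n₁ n₂ n₃ n).filter (fun z => len z ≤ L₁)).card < (Zf n₁ n₂ n₃ n).card)
    (hB : (Zf n₁ n₂ n₃ n).card + 2 ≤ 2 * ((Zf n₁ n₂ n₃ n).filter (fun z => len z ≤ L₂)).card) :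
    (L₁ : ℚ) < medianLen n₁ n₂ n₃ n ∧ medianLen n₁ n₂ n₃ n ≤ L₂ := by
  have hs : (sortedLengths n₁ n₂ n₃ n).Pairwise (· ≤ ·) := Multiset.pairwise_sort _ _
  set l := sortedLengths n₁ n₂ n₃ n with hl
  set M := (Zf n₁ n₂ n₃ n).card with hMdef
  have hlen : l.length = M := length_sortedLengths n₁ n₂ n₃ n
  have hc1 : l.countP (fun x => decide (x ≤ L₁))
      = ((Zf n₁ n₂ n₃ n).filter (fun z => len z ≤ L₁)).card := countP_sortedLengths _ _ _ _ _
  have hc2 : l.countP (fun x => decide (x ≤ L₂))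
      = ((Zf n₁ n₂ n₃ n).filter (fun z => len z ≤ L₂)).card := countP_sortedLengths _ _ _ _ _
  have hle2 : ((Zf n₁ n₂ n₃ n).filter (fun z => len z ≤ L₂)).card ≤ M :=
    Finset.card_filter_le _ _
  have hM2 : 2 ≤ M := by omega
  have hi2 : M / 2 < M := by omega
  have hi1 : M / 2 - 1 < M := by omega
  have f1 : L₁ < l.getD (M / 2) 0 := by
    apply sorted_getD_gt hs (by omega)
    omega
  have f2 : l.getD (M / 2) 0 ≤ L₂ := by
    apply sorted_getD_le hs (by omega)
    omega
  rw [medianLen]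
  simp only [← hl, hlen]
  split_ifs with hpar
  · constructor
    · exact_mod_cast f1
    · exact_mod_cast f2
  · have heven : M % 2 = 0 := by omega
    have f3 : L₁ < l.getD (M / 2 - 1) 0 := by
      apply sorted_getD_gt hs (by omega)
      omega
    have f4 : l.getD (M / 2 - 1) 0 ≤ L₂ := by
      apply sorted_getD_le hs (by omega)
      omega
    constructor
    · have h1 : (L₁ : ℚ) + 1 ≤ (l.getD (M / 2 - 1) 0 : ℚ) := by exact_mod_cast f3
      have h2 : (L₁ : ℚ) + 1 ≤ (l.getD (M / 2) 0 : ℚ) := by exact_mod_cast f1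
      linarith
    · have h1 : (l.getD (M / 2 - 1) 0 : ℚ) ≤ L₂ := by exact_mod_cast f4
      have h2 : (l.getD (M / 2) 0 : ℚ) ≤ L₂ := by exact_mod_cast f2
      linarith

lemma eventually_quad (α β γ : ℚ) (hα : 0 < α) :
    ∃ N : ℕ, 0 < N ∧ ∀ n : ℕ, N ≤ n → β * n + γ ≤ α * n ^ 2 := by
  refine ⟨⌈(|β| + |γ|) / α⌉₊ + 1, by omega, ?_⟩
  intro n hn
  have hn1 : (1 : ℚ) ≤ n := by
    have : 1 ≤ n := by omega
    exact_mod_cast this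
  have hceil : (|β| + |γ|) / α ≤ (n : ℚ) := by
    calc (|β| + |γ|) / α ≤ (⌈(|β| + |γ|) / α⌉₊ : ℚ) := Nat.le_ceil _
      _ ≤ n := by exact_mod_cast le_trans (by omega : ⌈(|β| + |γ|) / α⌉₊ ≤ n) le_rfl
  have h1 : |β| + |γ| ≤ α * n := by
    rw [div_le_iff₀ hα] at hceil
    linarith
  have h2 : β * n + γ ≤ (|β| + |γ|) * n := by
    have hb : β ≤ |β| := le_abs_self β
    have hg : γ ≤ |γ| := le_abs_self γ
    have hgn : |γ| ≤ |γ| * n := le_mul_of_one_le_right (abs_nonneg _) hn1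
    have hn0 : (0 : ℚ) ≤ n := by linarith
    nlinarith
  calc β * n + γ ≤ (|β| + |γ|) * n := h2
    _ ≤ (α * n) * n := by
        apply mul_le_mul_of_nonneg_right h1
        linarith
    _ = α * n ^ 2 := by ring

lemma master_A (n₁ n₂ n₃ d : ℕ) (h1 : 0 < n₁) (h2 : 0 < n₂) (h3 : 0 < n₃) (hd : 0 < d)
    (hsum : (n₁ : ℚ) + n₃ = 2 * n₂) (s e : ℚ) (hs : 0 < s) (he : 0 < e)
    (hkey : (n₂ : ℚ) * n₃ * s ^ 2 = (d : ℚ) ^ 2) :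
    ∃ N : ℕ, 0 < N ∧ ∀ n : ℕ, N ≤ n →
      ((n : ℚ) * d + n₂ * n₃) ^ 2 * n₁ + ((n : ℚ) * d + n₁ * n₂) ^ 2 * n₃
        + ((3 * (n₁ : ℚ) + n₃ + 8) * ((n : ℚ) + 1) + 1) * (4 * n₁ * n₃ * d ^ 2 * n₂ ^ 2)
        ≤ 2 * ((n : ℚ) * (s + e * n₁)) ^ 2 * n₃ * n₂ ^ 2 := by
  have h1' : (0 : ℚ) < n₁ := by exact_mod_cast h1
  have h2' : (0 : ℚ) < n₂ := by exact_mod_cast h2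
  have h3' : (0 : ℚ) < n₃ := by exact_mod_cast h3
  have hd' : (0 : ℚ) < d := by exact_mod_cast hd
  set R : ℚ := 4 * n₁ * n₃ * d ^ 2 * n₂ ^ 2 with hR
  have hα : (0 : ℚ) < 2 * n₂ ^ 2 * n₃ * e * n₁ * s := by positivity
  obtain ⟨N, hN0, hN⟩ := eventually_quad (2 * n₂ ^ 2 * n₃ * e * n₁ * s)
    (4 * d * n₁ * n₂ * n₃ + (3 * n₁ + n₃ + 8) * R)
    ((n₂ * n₃) ^ 2 * n₁ + (n₁ * n₂) ^ 2 * n₃ + (3 * n₁ + n₃ + 8 + 1) * R) hα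
  refine ⟨N, hN0, ?_⟩
  intro n hn
  have hq := hN n hn
  have hcoef : 2 * (d : ℚ) ^ 2 * n₂ + 2 * n₂ ^ 2 * n₃ * e * n₁ * s
      ≤ 2 * (s + e * n₁) ^ 2 * n₃ * n₂ ^ 2 := by
    have hid : 2 * (s + e * n₁) ^ 2 * (n₃ : ℚ) * n₂ ^ 2
        = 2 * (d : ℚ) ^ 2 * n₂ + 2 * n₂ ^ 2 * n₃ * (2 * s * (e * n₁) + (e * n₁) ^ 2) := by
      linear_combination (2 * (n₂ : ℚ)) * hkey
    rw [hid]
    have hA : (0 : ℚ) ≤ n₂ ^ 2 * n₃ * (s * (e * n₁)) := by positivity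
    have hB : (0 : ℚ) ≤ n₂ ^ 2 * n₃ * (e * n₁) ^ 2 := by positivity
    nlinarith [hA, hB]
  have hn2 : (0 : ℚ) ≤ (n : ℚ) ^ 2 := sq_nonneg _
  have hmul := mul_le_mul_of_nonneg_right hcoef hn2
  have hexp : ((n : ℚ) * d + n₂ * n₃) ^ 2 * n₁ + ((n : ℚ) * d + n₁ * n₂) ^ 2 * n₃
        + ((3 * (n₁ : ℚ) + n₃ + 8) * ((n : ℚ) + 1) + 1) * R
      = ((n₁ : ℚ) + n₃) * d ^ 2 * n ^ 2
        + ((4 * d * n₁ * n₂ * n₃ + (3 * n₁ + n₃ + 8) * R) * n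
          + ((n₂ * n₃) ^ 2 * n₁ + (n₁ * n₂) ^ 2 * n₃ + (3 * n₁ + n₃ + 8 + 1) * R)) := by
    ring
  have hsub : ((n₁ : ℚ) + n₃) * d ^ 2 * n ^ 2 = 2 * d ^ 2 * n₂ * n ^ 2 := by
    rw [hsum]; ring
  have hrhs : 2 * ((n : ℚ) * (s + e * n₁)) ^ 2 * n₃ * n₂ ^ 2
      = (2 * (s + e * n₁) ^ 2 * n₃ * n₂ ^ 2) * n ^ 2 := by ring
  rw [hexp, hsub, hrhs]
  nlinarith [hq, hmul]

lemma master_B (n₁ n₂ n₃ d : ℕ) (h1 : 0 < n₁) (h2 : 0 < n₂) (h3 : 0 < n₃) (hd : 0 < d)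
    (hsum : (n₁ : ℚ) + n₃ = 2 * n₂) (s e : ℚ) (hs : 0 < s) (he : 0 < e)
    (hes : 2 * e * n₁ ≤ s)
    (hkey : (n₂ : ℚ) * n₃ * s ^ 2 = (d : ℚ) ^ 2) :
    ∃ N : ℕ, 0 < N ∧ ∀ n : ℕ, N ≤ n →
      ((n₁ : ℚ) ≤ (n : ℚ) * (s - e * n₁)) ∧
      (2 * ((n : ℚ) * (s - e * n₁)) ^ 2 * n₃ * n₂ ^ 2
        + ((3 * (n₁ : ℚ) + n₃ + 8) * ((n : ℚ) + 1) + 2) * (4 * n₁ * n₃ * d ^ 2 * n₂ ^ 2)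
        ≤ ((n : ℚ) * d) ^ 2 * n₁ + ((n : ℚ) * d) ^ 2 * n₃) := by
  have h1' : (0 : ℚ) < n₁ := by exact_mod_cast h1
  have h2' : (0 : ℚ) < n₂ := by exact_mod_cast h2
  have h3' : (0 : ℚ) < n₃ := by exact_mod_cast h3
  have hd' : (0 : ℚ) < d := by exact_mod_cast hd
  have hse : (0 : ℚ) < s - e * n₁ := by nlinarith
  set R : ℚ := 4 * n₁ * n₃ * d ^ 2 * n₂ ^ 2 with hR
  have hα : (0 : ℚ) < 2 * n₂ ^ 2 * n₃ * e * n₁ * s := by positivity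
  obtain ⟨N, hN0, hN⟩ := eventually_quad (2 * n₂ ^ 2 * n₃ * e * n₁ * s)
    ((3 * n₁ + n₃ + 8) * R) ((3 * n₁ + n₃ + 8 + 2) * R) hα
  obtain ⟨N₂, hN₂0, hN₂⟩ := eventually_quad 1 (n₁ / (s - e * n₁)) 0 one_pos
  refine ⟨max N (max N₂ 1), by positivity, ?_⟩
  intro n hn
  have hnN : N ≤ n := le_trans (le_max_left _ _) hn
  have hnN₂ : N₂ ≤ n := le_trans (le_trans (le_max_left _ _) (le_max_right _ _)) hn
  have hn1 : 1 ≤ n := le_trans (le_trans (le_max_right _ _) (le_max_right _ _)) hn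
  have hn1' : (1 : ℚ) ≤ n := by exact_mod_cast hn1
  constructor
  · have := hN₂ n hnN₂
    have hq : n₁ / (s - e * n₁) * n ≤ (n : ℚ) ^ 2 := by linarith
    have h2q : n₁ / (s - e * n₁) ≤ (n : ℚ) := by
      by_contra hc
      push_neg at hc
      have hnn : (0 : ℚ) < n := by linarith
      nlinarith
    rw [div_le_iff₀ hse] at h2q
    linarith
  · have hq := hN n hnN
    have hcoef : 2 * (s - e * n₁) ^ 2 * n₃ * n₂ ^ 2 + 2 * n₂ ^ 2 * n₃ * e * n₁ * s
        ≤ 2 * (d : ℚ) ^ 2 * n₂ := by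
      have hens : e * n₁ ≤ s := by nlinarith
      have hneg : e * n₁ * (e * n₁ - s) ≤ 0 :=
        mul_nonpos_of_nonneg_of_nonpos (by positivity) (by linarith)
      have hsq : (s - e * n₁) ^ 2 + e * n₁ * s ≤ s ^ 2 := by nlinarith [hneg]
      have hmon := mul_le_mul_of_nonneg_left hsq (by positivity : (0:ℚ) ≤ 2 * n₂ ^ 2 * n₃)
      have h2d : 2 * (d : ℚ) ^ 2 * n₂ = 2 * n₂ ^ 2 * n₃ * s ^ 2 := by
        linear_combination (-2 * (n₂ : ℚ)) * hkey
      calc 2 * (s - e * n₁) ^ 2 * (n₃ : ℚ) * n₂ ^ 2 + 2 * n₂ ^ 2 * n₃ * e * n₁ * s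
          = 2 * n₂ ^ 2 * n₃ * ((s - e * n₁) ^ 2 + e * n₁ * s) := by ring
        _ ≤ 2 * n₂ ^ 2 * n₃ * s ^ 2 := hmon
        _ = 2 * (d : ℚ) ^ 2 * n₂ := h2d.symm
    have hn2 : (0 : ℚ) ≤ (n : ℚ) ^ 2 := sq_nonneg _
    have hmul := mul_le_mul_of_nonneg_right hcoef hn2
    have hrhs : ((n : ℚ) * d) ^ 2 * n₁ + ((n : ℚ) * d) ^ 2 * n₃
        = ((n₁ : ℚ) + n₃) * d ^ 2 * n ^ 2 := by ring
    have hsub : ((n₁ : ℚ) + n₃) * d ^ 2 * n ^ 2 = 2 * d ^ 2 * n₂ * n ^ 2 := by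
      rw [hsum]; ring
    rw [hrhs, hsub]
    have e1 : 2 * ((n : ℚ) * (s - e * n₁)) ^ 2 * n₃ * n₂ ^ 2
        = (2 * (s - e * n₁) ^ 2 * n₃ * n₂ ^ 2) * n ^ 2 := by ring
    have e2 : ((3 * (n₁ : ℚ) + n₃ + 8) * ((n : ℚ) + 1) + 2) * (4 * n₁ * n₃ * d ^ 2 * n₂ ^ 2)
        = (3 * (n₁ : ℚ) + n₃ + 8) * R * n + (3 * n₁ + n₃ + 8 + 2) * R := by rw [hR]; ring
    rw [e1, e2]
    linarith [hq, hmul]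


/-- For a primitive Pythagorean triple a² + b² = c² with b < a, setting
n₁ = a² − b², n₂ = a², n₃ = a² + b² = c² gives a numerical semigroup whose fulcrum
constant is F = (a² − b²)/(2a²) < 1/2 and whose asymptotic median constant is the
rational number (1/(a²−b²))(1 − c/(2a)) + (1/(a²+b²))(c/(2a)). -/
theorem pythagorean_triple_rational_median (a b c : ℕ) (hb : 0 < b) (hba : b < a)
    (hpyth : a ^ 2 + b ^ 2 = c ^ 2) (hcop : Nat.gcd a b = 1)
    (n₁ n₂ n₃ : ℕ) (e₁ : n₁ = a ^ 2 - b ^ 2) (e₂ : n₂ = a ^ 2) (e₃ : n₃ = a ^ 2 + b ^ 2)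
    (F : ℚ) (hF : F = ((n₁ : ℚ) * ((n₃ : ℚ) - (n₂ : ℚ))) / ((n₂ : ℚ) * ((n₃ : ℚ) - (n₁ : ℚ)))) :
    0 < n₁ ∧ n₁ < n₂ ∧ n₂ < n₃ ∧ Nat.gcd n₁ (Nat.gcd n₂ n₃) = 1 ∧
    F = ((a : ℚ) ^ 2 - (b : ℚ) ^ 2) / (2 * (a : ℚ) ^ 2) ∧ F < 1 / 2 ∧
    ∀ ε : ℝ, 0 < ε → ∃ N : ℕ, ∀ n : ℕ, inS n₁ n₂ n₃ n → N ≤ n →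
      |(medianLen n₁ n₂ n₃ n : ℝ) / (n : ℝ) -
        ((1 / (n₁ : ℝ)) * (1 - (c : ℝ) / (2 * (a : ℝ))) +
          (1 / (n₃ : ℝ)) * ((c : ℝ) / (2 * (a : ℝ))))| < ε := by
  classical
  have ha : 0 < a := lt_trans hb hba
  have hb2a2 : b ^ 2 < a ^ 2 := Nat.pow_lt_pow_left hba (by norm_num)
  have h1 : 0 < n₁ := by omega
  have h2 : 0 < n₂ := by
    have : 0 < a ^ 2 := Nat.pow_pos ha
    omega
  have hb2 : 0 < b ^ 2 := Nat.pow_pos hb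
  have h3 : 0 < n₃ := by omega
  have h12 : n₁ < n₂ := by omega
  have h23 : n₂ < n₃ := by omega
  have hc0 : 0 < c := by
    rcases Nat.eq_zero_or_pos c with h | h
    · subst h; simp at hpyth; omega
    · exact h
  have hca : a < c := by
    by_contra hcon
    push_neg at hcon
    have := Nat.pow_le_pow_left hcon 2
    omega
  -- gcd
  have hgcd : Nat.gcd n₁ (Nat.gcd n₂ n₃) = 1 := by
    have hab : Nat.Coprime (a ^ 2) (b ^ 2) := Nat.Coprime.pow _ _ (Nat.coprime_iff_gcd_eq_one.mpr hcop)
    have h23' : Nat.Coprime n₂ n₃ := by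
      rw [e₂, e₃]
      have : a ^ 2 + b ^ 2 = b ^ 2 + a ^ 2 := by ring
      rw [this]
      exact (Nat.coprime_add_self_right).mpr hab
    rw [h23', Nat.gcd_one_right]
  -- F
  have haq : (0 : ℚ) < a := by exact_mod_cast ha
  have hbq : (0 : ℚ) < b := by exact_mod_cast hb
  have hcq : (0 : ℚ) < c := by exact_mod_cast hc0
  have hn1q : (n₁ : ℚ) = (a : ℚ) ^ 2 - (b : ℚ) ^ 2 := by
    rw [e₁]
    push_cast [Nat.cast_sub hb2a2.le]
    ring
  have hn2q : (n₂ : ℚ) = (a : ℚ) ^ 2 := by rw [e₂]; push_cast; ring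
  have hn3q : (n₃ : ℚ) = (a : ℚ) ^ 2 + (b : ℚ) ^ 2 := by rw [e₃]; push_cast; ring
  have hn3cq : (n₃ : ℚ) = (c : ℚ) ^ 2 := by
    rw [e₃, hpyth]; push_cast; ring
  have hbaq : (b : ℚ) ^ 2 < (a : ℚ) ^ 2 := by exact_mod_cast hb2a2
  have hFval : F = ((a : ℚ) ^ 2 - (b : ℚ) ^ 2) / (2 * (a : ℚ) ^ 2) := by
    rw [hF, hn1q, hn2q, hn3q]
    have hb2q : (0 : ℚ) < (b : ℚ) ^ 2 := by positivity
    have ha2q : (0 : ℚ) < (a : ℚ) ^ 2 := by positivity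
    rw [show (a : ℚ) ^ 2 + b ^ 2 - a ^ 2 = (b : ℚ) ^ 2 by ring,
      show (a : ℚ) ^ 2 + b ^ 2 - ((a : ℚ) ^ 2 - b ^ 2) = 2 * (b : ℚ) ^ 2 by ring]
    rw [div_eq_div_iff (by positivity) (by positivity)]
    ring
  have hFlt : F < 1 / 2 := by
    rw [hFval, div_lt_div_iff₀ (by positivity) (by norm_num)]
    nlinarith
  refine ⟨h1, h12, h23, hgcd, hFval, hFlt, ?_⟩
  -- the limit statement
  intro ε hε
  -- AP structure
  obtain ⟨d, hd_def⟩ : ∃ d, d = b ^ 2 := ⟨_, rfl⟩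
  have hd : 0 < d := by omega
  have e2 : n₂ = n₁ + d := by omega
  have e3 : n₃ = n₂ + d := by omega
  have hcop2 : Nat.Coprime d n₂ := by
    rw [hd_def, e₂]
    exact Nat.Coprime.pow _ _ (Nat.coprime_iff_gcd_eq_one.mpr hcop).symm
  have hdq0 : (0 : ℚ) < d := by exact_mod_cast hd
  have h1q : (0 : ℚ) < n₁ := by exact_mod_cast h1
  have h2q : (0 : ℚ) < n₂ := by exact_mod_cast h2
  have h3q : (0 : ℚ) < n₃ := by exact_mod_cast h3
  have hdq : (d : ℚ) = (b : ℚ) ^ 2 := by rw [hd_def]; push_cast; ring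
  obtain ⟨s, hs_def⟩ : ∃ s : ℚ, s = (d : ℚ) / (a * c) := ⟨_, rfl⟩
  have hs : 0 < s := by rw [hs_def]; positivity
  have hkey : (n₂ : ℚ) * n₃ * s ^ 2 = (d : ℚ) ^ 2 := by
    rw [hs_def, hn2q, hn3cq]
    field_simp
  have hsum : (n₁ : ℚ) + n₃ = 2 * n₂ := by
    have h' : n₁ + n₃ = 2 * n₂ := by omega
    exact_mod_cast h'
  have he2q : (n₂ : ℚ) = n₁ + d := by exact_mod_cast e2
  have he3q : (n₃ : ℚ) = n₂ + d := by exact_mod_cast e3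
  have hcaq : (a : ℚ) < c := by exact_mod_cast hca
  have hs1 : s < 1 := by
    rw [hs_def, div_lt_one (by positivity)]
    rw [hdq]
    nlinarith
  obtain ⟨x, hx_def⟩ : ∃ x : ℚ, x = (1 - s) / n₁ := ⟨_, rfl⟩
  have hxn₁ : x * n₁ = 1 - s := by rw [hx_def]; field_simp
  have hx0 : 0 < x := by
    rw [hx_def]
    apply div_pos (by linarith) h1q
  have hn2s : (n₂ : ℚ) * s < d := by
    rw [hs_def, ← mul_div_assoc, div_lt_iff₀ (by positivity), hn2q]
    nlinarith only [mul_pos (mul_pos hdq0 haq) (sub_pos.mpr hcaq)]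
  have hgap1 : 1 / (n₂ : ℚ) < x := by
    rw [hx_def, div_lt_div_iff₀ h2q h1q]
    nlinarith [hn2s, he2q]
  -- choose rational ε'
  obtain ⟨εr, hεr0, hεrε⟩ : ∃ q : ℚ, 0 < q ∧ (q : ℝ) < ε / 2 := by
    obtain ⟨q, hq1, hq2⟩ := exists_rat_btwn (show (0 : ℝ) < ε / 2 by linarith)
    exact ⟨q, by exact_mod_cast hq1, hq2⟩
  obtain ⟨e, he_def⟩ : ∃ e : ℚ, e = min (min ((x - 1 / n₂) / 2) (s / (4 * n₁))) εr := ⟨_, rfl⟩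
  have he0 : 0 < e := by
    rw [he_def]
    exact lt_min (lt_min (by linarith) (by positivity)) hεr0
  have he1 : e ≤ (x - 1 / n₂) / 2 := by
    rw [he_def]; exact le_trans (min_le_left _ _) (min_le_left _ _)
  have he2' : e ≤ s / (4 * n₁) := by
    rw [he_def]; exact le_trans (min_le_left _ _) (min_le_right _ _)
  have heεr : e ≤ εr := by rw [he_def]; exact min_le_right _ _
  have hes : 2 * e * n₁ ≤ s := by
    have h' : (s / (4 * n₁)) * n₁ = s / 4 := by field_simp
    have := mul_le_mul_of_nonneg_right he2' h1q.le
    rw [h'] at this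
    linarith
  have hxe2 : 1 / (n₂ : ℚ) ≤ x - 2 * e := by linarith
  have hxe0 : 0 < x - e := by
    have hp : (0 : ℚ) < 1 / (n₂ : ℚ) := by positivity
    linarith
  have hxn1le : x * n₁ ≤ 1 := by linarith [hxn₁, hs]
  -- master lemmas
  obtain ⟨NA, hNA0, hNA⟩ := master_A n₁ n₂ n₃ d h1 h2 h3 hd hsum s e hs he0 hkey
  obtain ⟨NB, hNB0, hNB⟩ := master_B n₁ n₂ n₃ d h1 h2 h3 hd hsum s e hs he0 hes hkey
  refine ⟨max (max NA NB) (max (⌈(2 : ℝ) / ε⌉₊ + 1) 1), ?_⟩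
  intro n hnS hNn
  have hnNA : NA ≤ n := le_trans (le_trans (le_max_left _ _) (le_max_left _ _)) hNn
  have hnNB : NB ≤ n := le_trans (le_trans (le_max_right _ _) (le_max_left _ _)) hNn
  have hnN₃ : ⌈(2 : ℝ) / ε⌉₊ + 1 ≤ n :=
    le_trans (le_trans (le_max_left _ _) (le_max_right _ _)) hNn
  have hn1 : 1 ≤ n := le_trans (le_trans (le_max_right _ _) (le_max_right _ _)) hNn
  have hnq0 : (0 : ℚ) < n := by exact_mod_cast hn1
  obtain ⟨hB1, hB2⟩ := hNB n hnNB
  have hA2 := hNA n hnNA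
  -- Lc
  obtain ⟨Lc, hLc_def⟩ : ∃ Lc, Lc = (n + n₂ - 1) / n₂ := ⟨_, rfl⟩
  have hLc1 : Lc * n₂ ≤ n + n₂ := by
    rw [hLc_def]
    have := Nat.div_mul_le_self (n + n₂ - 1) n₂
    omega
  have hLc2 : n ≤ Lc * n₂ := by
    have hdm := Nat.div_add_mod (n + n₂ - 1) n₂
    have hmod := Nat.mod_lt (n + n₂ - 1) h2
    have hco : n₂ * ((n + n₂ - 1) / n₂) = ((n + n₂ - 1) / n₂) * n₂ := Nat.mul_comm _ _
    rw [hLc_def]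
    omega
  have hLcpos : 1 ≤ Lc := by
    rcases Nat.eq_zero_or_pos Lc with h | h
    · rw [h] at hLc2; simp at hLc2; omega
    · exact h
  have hLcn : Lc ≤ n + 1 := by
    by_contra hcon
    push_neg at hcon
    have h' : (n + 2) * n₂ ≤ Lc * n₂ := Nat.mul_le_mul_right _ (by omega)
    have hnn2 : n ≤ n * n₂ := Nat.le_mul_of_pos_right _ h2
    have hexp : (n + 2) * n₂ = n * n₂ + 2 * n₂ := by ring
    omega
  have hLcm1 : (Lc - 1) * n₂ ≤ n := by
    have h0 : Lc - 1 + 1 = Lc := by omega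
    have hsplit : (Lc - 1) * n₂ + n₂ = Lc * n₂ := by
      calc (Lc - 1) * n₂ + n₂ = (Lc - 1 + 1) * n₂ := by ring
        _ = Lc * n₂ := by rw [h0]
    omega
  have hLc1' : Lc - 1 + 1 = Lc := by omega
  have hLc'q : ((Lc - 1 : ℕ) : ℚ) = (Lc : ℚ) - 1 := by
    rw [Nat.cast_sub hLcpos]; norm_num
  have hLc2q : (n : ℚ) ≤ (Lc : ℚ) * n₂ := by exact_mod_cast hLc2
  have hLc1q : (Lc : ℚ) * n₂ ≤ (n : ℚ) + n₂ := by exact_mod_cast hLc1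
  have hLcm1q : ((Lc - 1 : ℕ) : ℚ) * n₂ ≤ n := by exact_mod_cast hLcm1
  -- L₁ L₂
  obtain ⟨L₁, hL₁_def⟩ : ∃ L₁, L₁ = ⌊(x - e) * n⌋₊ := ⟨_, rfl⟩
  obtain ⟨L₂, hL₂_def⟩ : ∃ L₂, L₂ = ⌈(x + e) * n⌉₊ := ⟨_, rfl⟩
  have hL₁ub : (L₁ : ℚ) ≤ (x - e) * n := by
    rw [hL₁_def]; exact Nat.floor_le (by positivity)
  have hL₁lb : (x - e) * n < (L₁ : ℚ) + 1 := by
    rw [hL₁_def]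
    have hfl := Nat.lt_floor_add_one ((x - e) * n)
    push_cast
    push_cast at hfl
    linarith only [hfl]
  have hL₂lb : (x + e) * n ≤ (L₂ : ℚ) := by rw [hL₂_def]; exact Nat.le_ceil _
  have hL₂ub : (L₂ : ℚ) ≤ (x + e) * n + 1 := by
    rw [hL₂_def]
    have hcl := Nat.ceil_lt_add_one (show (0 : ℚ) ≤ (x + e) * n by positivity)
    linarith only [hcl]
  have hL₁L₂ : L₁ ≤ L₂ := by
    have hq' : (L₁ : ℚ) ≤ (L₂ : ℚ) := by nlinarith only [hL₁ub, hL₂lb, mul_nonneg he0.le hnq0.le]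
    exact_mod_cast hq'
  -- region hypotheses
  have hL₁n : n ≤ (L₁ + 1) * n₂ := by
    have h1' : (n : ℚ) / n₂ ≤ (x - 2 * e) * n := by
      rw [div_le_iff₀ h2q]
      have hmm := mul_le_mul_of_nonneg_right hxe2 (le_of_lt (mul_pos hnq0 h2q))
      calc (n : ℚ) = (1 / n₂) * (n * n₂) := by field_simp
        _ ≤ (x - 2 * e) * (n * n₂) := hmm
        _ = (x - 2 * e) * n * n₂ := by ring
    have h2'' : (x - 2 * e) * n < (L₁ : ℚ) + 1 := by nlinarith only [hL₁lb, mul_nonneg he0.le hnq0.le]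
    have h3'' : (n : ℚ) / n₂ < (L₁ : ℚ) + 1 := lt_of_le_of_lt h1' h2''
    rw [div_lt_iff₀ h2q] at h3''
    have hq' : (n : ℚ) < ((L₁ + 1 : ℕ) : ℚ) * n₂ := by push_cast; linarith only [h3'']
    have : n < (L₁ + 1) * n₂ := by exact_mod_cast hq'
    omega
  have hL₂n : n ≤ (L₂ + 1) * n₂ :=
    le_trans hL₁n (Nat.mul_le_mul_right _ (by omega))
  have hL₁x : (L₁ : ℚ) * n₁ ≤ n := by
    have t1 := mul_le_mul_of_nonneg_right hL₁ub h1q.le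
    have hxnn : x * n * n₁ = (1 - s) * n := by
      rw [← hxn₁]; ring
    nlinarith only [t1, hxnn, mul_nonneg (mul_nonneg he0.le hnq0.le) h1q.le, mul_nonneg hs.le hnq0.le]
  have hLcm1x : ((Lc - 1 : ℕ) : ℚ) * n₁ ≤ n := by
    have h' : (Lc - 1) * n₁ ≤ (Lc - 1) * n₂ := Nat.mul_le_mul_left _ (by omega)
    have : (Lc - 1) * n₁ ≤ n := le_trans h' hLcm1
    exact_mod_cast this
  -- count bounds
  obtain ⟨hTg1ub, hTg1lbf⟩ := T_bounds hd h1 e2 e3 hcop2 hnS L₁ hL₁n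
  have hTg1lb := hTg1lbf hL₁x
  obtain ⟨hTg2ub, -⟩ := T_bounds hd h1 e2 e3 hcop2 hnS L₂ hL₂n
  obtain ⟨hTgcub, hTgclbf⟩ := T_bounds hd h1 e2 e3 hcop2 hnS (Lc - 1)
    (by rw [hLc1']; exact hLc2)
  have hCgclb' := hTgclbf hLcm1x
  obtain ⟨hTltub, hTltlbf⟩ := T2_bounds hd h1 e2 e3 hcop2 hnS Lc hLc1 hLcn
  have hCltlb' := hTltlbf (by
    have h' : n ≤ Lc * n₃ := le_trans hLc2 (Nat.mul_le_mul_left _ (by omega))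
    exact_mod_cast h')
  -- partitions
  have hpart : ∀ L : ℕ, ((Zf n₁ n₂ n₃ n).filter (fun z => len z ≤ L)).card
      + ((Zf n₁ n₂ n₃ n).filter (fun z => L < len z)).card = (Zf n₁ n₂ n₃ n).card := by
    intro L
    have h' := Finset.card_filter_add_card_filter_not
      (s := Zf n₁ n₂ n₃ n) (p := fun z => len z ≤ L)
    simpa [not_le] using h'
  have hpart2 : ((Zf n₁ n₂ n₃ n).filter (fun z => len z < Lc)).card
      + ((Zf n₁ n₂ n₃ n).filter (fun z => Lc - 1 < len z)).card = (Zf n₁ n₂ n₃ n).card := by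
    have hfe : (Zf n₁ n₂ n₃ n).filter (fun z => ¬ len z < Lc)
        = (Zf n₁ n₂ n₃ n).filter (fun z => Lc - 1 < len z) := by
      apply Finset.filter_congr
      intro z _
      simp only [not_lt, eq_iff_iff]
      omega
    have h' := Finset.card_filter_add_card_filter_not
      (s := Zf n₁ n₂ n₃ n) (p := fun z => len z < Lc)
    rw [hfe] at h'
    exact h'
  -- names
  set MM := (Zf n₁ n₂ n₃ n).card with hMM
  set T1 := ((Zf n₁ n₂ n₃ n).filter (fun z => L₁ < len z)).card with hT1
  set T2 := ((Zf n₁ n₂ n₃ n).filter (fun z => L₂ < len z)).card with hT2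
  set TL := ((Zf n₁ n₂ n₃ n).filter (fun z => len z < Lc)).card with hTL
  set TG := ((Zf n₁ n₂ n₃ n).filter (fun z => Lc - 1 < len z)).card with hTG
  -- opaque names
  obtain ⟨R, hR_def⟩ : ∃ R : ℚ, R = 4 * n₁ * n₃ * d ^ 2 * n₂ ^ 2 := ⟨_, rfl⟩
  obtain ⟨K1, hK1_def⟩ : ∃ K : ℚ, K = (n₃ : ℚ) * n₂ ^ 2 := ⟨_, rfl⟩
  obtain ⟨K3, hK3_def⟩ : ∃ K : ℚ, K = (n₁ : ℚ) * n₂ ^ 2 := ⟨_, rfl⟩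
  obtain ⟨G1, hG1_def⟩ : ∃ G : ℚ, G = ((n₁ : ℚ) + 2) * ((n : ℚ) + 1) := ⟨_, rfl⟩
  obtain ⟨G3, hG3_def⟩ : ∃ G : ℚ, G = ((n₃ : ℚ) + 2) * ((n : ℚ) + 1) := ⟨_, rfl⟩
  obtain ⟨U1, hU1_def⟩ : ∃ U : ℚ, U = (n : ℚ) * (s + e * n₁) := ⟨_, rfl⟩
  obtain ⟨U2, hU2_def⟩ : ∃ U : ℚ, U = (n : ℚ) * (s - e * n₁) := ⟨_, rfl⟩
  obtain ⟨W1, hW1_def⟩ : ∃ W : ℚ, W = (n : ℚ) - (L₁ : ℚ) * n₁ := ⟨_, rfl⟩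
  obtain ⟨W2, hW2_def⟩ : ∃ W : ℚ, W = (n : ℚ) - (L₂ : ℚ) * n₁ := ⟨_, rfl⟩
  obtain ⟨WC, hWC_def⟩ : ∃ W : ℚ, W = (n : ℚ) - ((Lc - 1 : ℕ) : ℚ) * n₁ := ⟨_, rfl⟩
  obtain ⟨VC, hVC_def⟩ : ∃ V : ℚ, V = (Lc : ℚ) * n₃ - n := ⟨_, rfl⟩
  obtain ⟨D1, hD1_def⟩ : ∃ D : ℚ, D = (n : ℚ) * d := ⟨_, rfl⟩
  obtain ⟨B2, hB2_def⟩ : ∃ B : ℚ, B = (n₁ : ℚ) * n₂ := ⟨_, rfl⟩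
  obtain ⟨B3, hB3_def⟩ : ∃ B : ℚ, B = (n₂ : ℚ) * n₃ := ⟨_, rfl⟩
  have hRpos : (0 : ℚ) < R := by rw [hR_def]; positivity
  have hq1 : ∀ X : ℚ, X / (4 * n₁ * d ^ 2) * R = X * K1 := by
    intro X; rw [hR_def, hK1_def]; field_simp
  have hq3 : ∀ X : ℚ, X / (4 * n₃ * d ^ 2) * R = X * K3 := by
    intro X; rw [hR_def, hK3_def]; field_simp
  have hK1pos : (0 : ℚ) ≤ K1 := by rw [hK1_def]; positivity
  have hxx2 : (n : ℚ) * n₂ = n * n₁ + n * d := by rw [he2q]; ring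
  have hxx3 : (n : ℚ) * n₃ = n * n₂ + n * d := by rw [he3q]; ring
  -- rewrite count bounds in opaque form
  rw [← hW1_def, ← hG1_def] at hTg1lb
  rw [← hW2_def, ← hG1_def] at hTg2ub
  rw [← hWC_def, ← hG1_def] at hTgcub hCgclb'
  rw [← hVC_def, ← hG3_def] at hTltub hCltlb'
  -- square comparisons
  have hWlb : U1 ≤ W1 := by
    rw [hU1_def, hW1_def]
    have t1 := mul_le_mul_of_nonneg_right hL₁ub h1q.le
    have hxnn : x * n * n₁ = (1 - s) * n := by rw [← hxn₁]; ring
    nlinarith only [t1, hxnn, hnq0, h1q, he0]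
  have hU10 : (0 : ℚ) ≤ U1 := by rw [hU1_def]; positivity
  have hWsq : U1 ^ 2 ≤ W1 ^ 2 := pow_le_pow_left₀ hU10 hWlb 2
  have hW2ub : W2 ≤ U2 := by
    rw [hU2_def, hW2_def]
    have t1 := mul_le_mul_of_nonneg_right hL₂lb h1q.le
    have hxnn : x * n * n₁ = (1 - s) * n := by rw [← hxn₁]; ring
    nlinarith only [t1, hxnn, hnq0, h1q, he0]
  have hW2lb : -U2 ≤ W2 := by
    rw [hU2_def, hW2_def]
    have t1 := mul_le_mul_of_nonneg_right hL₂ub h1q.le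
    have hxnn : x * n * n₁ = (1 - s) * n := by rw [← hxn₁]; ring
    have hB1' : (n₁ : ℚ) ≤ (n : ℚ) * (s - e * n₁) := hB1
    nlinarith only [t1, hxnn, hB1', hnq0, h1q, he0]
  have hW2sq : W2 ^ 2 ≤ U2 ^ 2 := sq_le_sq' hW2lb hW2ub
  have hWC0 : (0 : ℚ) ≤ WC := by rw [hWC_def]; linarith only [hLcm1x]
  have hWCub : WC * n₂ ≤ D1 + B2 := by
    rw [hWC_def, hD1_def, hB2_def, hLc'q]
    have t1 := mul_le_mul_of_nonneg_right hLc2q h1q.le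
    nlinarith only [t1, hxx2]
  have hWCsq : (WC * n₂) ^ 2 ≤ (D1 + B2) ^ 2 :=
    pow_le_pow_left₀ (mul_nonneg hWC0 h2q.le) hWCub 2
  have hWClb : D1 ≤ WC * n₂ := by
    rw [hWC_def, hD1_def]
    have t1 := mul_le_mul_of_nonneg_right hLcm1q h1q.le
    nlinarith only [t1, hxx2, h2q, h1q]
  have hD10 : (0 : ℚ) ≤ D1 := by rw [hD1_def]; positivity
  have hWCsq' : D1 ^ 2 ≤ (WC * n₂) ^ 2 := pow_le_pow_left₀ hD10 hWClb 2
  have hVC0 : (0 : ℚ) ≤ VC := by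
    rw [hVC_def]
    have h' : n ≤ Lc * n₃ := le_trans hLc2 (Nat.mul_le_mul_left _ (by omega))
    have h'' : (n : ℚ) ≤ (Lc : ℚ) * n₃ := by exact_mod_cast h'
    linarith only [h'']
  have hVCub : VC * n₂ ≤ D1 + B3 := by
    rw [hVC_def, hD1_def, hB3_def]
    have t1 := mul_le_mul_of_nonneg_right hLc1q h3q.le
    nlinarith only [t1, hxx3]
  have hVCsq : (VC * n₂) ^ 2 ≤ (D1 + B3) ^ 2 :=
    pow_le_pow_left₀ (mul_nonneg hVC0 h2q.le) hVCub 2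
  have hVClb : D1 ≤ VC * n₂ := by
    rw [hVC_def, hD1_def]
    have t1 := mul_le_mul_of_nonneg_right hLc2q h3q.le
    nlinarith only [t1, hxx3, h2q, h3q]
  have hVCsq' : D1 ^ 2 ≤ (VC * n₂) ^ 2 := pow_le_pow_left₀ hD10 hVClb 2
  -- algebraic identities linking squares
  have hsqK1 : ∀ Y : ℚ, Y ^ 2 * K1 = (Y * n₂) ^ 2 * n₃ := by
    intro Y; rw [hK1_def]; ring
  have hsqK3 : ∀ Y : ℚ, Y ^ 2 * K3 = (Y * n₂) ^ 2 * n₁ := by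
    intro Y; rw [hK3_def]; ring
  -- scaled count bounds
  have f1 : U1 ^ 2 * K1 - G1 * R ≤ (T1 : ℚ) * R := by
    have hm := mul_le_mul_of_nonneg_right hTg1lb hRpos.le
    rw [sub_mul, hq1] at hm
    have hmo := mul_le_mul_of_nonneg_right hWsq hK1pos
    linarith only [hm, hmo]
  have fB : (T2 : ℚ) * R ≤ U2 ^ 2 * K1 + G1 * R := by
    have hm := mul_le_mul_of_nonneg_right hTg2ub hRpos.le
    rw [add_mul, hq1] at hm
    have hmo := mul_le_mul_of_nonneg_right hW2sq hK1pos
    linarith only [hm, hmo]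
  have f2 : (TG : ℚ) * R ≤ (D1 + B2) ^ 2 * n₃ + G1 * R := by
    have hm := mul_le_mul_of_nonneg_right hTgcub hRpos.le
    rw [add_mul, hq1, hsqK1] at hm
    have hmo := mul_le_mul_of_nonneg_right hWCsq h3q.le
    linarith only [hm, hmo]
  have f2' : D1 ^ 2 * n₃ - G1 * R ≤ (TG : ℚ) * R := by
    have hm := mul_le_mul_of_nonneg_right hCgclb' hRpos.le
    rw [sub_mul, hq1, hsqK1] at hm
    have hmo := mul_le_mul_of_nonneg_right hWCsq' h3q.le
    linarith only [hm, hmo]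
  have f3 : (TL : ℚ) * R ≤ (D1 + B3) ^ 2 * n₁ + G3 * R := by
    have hm := mul_le_mul_of_nonneg_right hTltub hRpos.le
    rw [add_mul, hq3, hsqK3] at hm
    have hmo := mul_le_mul_of_nonneg_right hVCsq h1q.le
    linarith only [hm, hmo]
  have f3' : D1 ^ 2 * n₁ - G3 * R ≤ (TL : ℚ) * R := by
    have hm := mul_le_mul_of_nonneg_right hCltlb' hRpos.le
    rw [sub_mul, hq3, hsqK3] at hm
    have hmo := mul_le_mul_of_nonneg_right hVCsq' h1q.le
    linarith only [hm, hmo]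
  -- master inequalities in opaque form
  have hA2' : (D1 + B3) ^ 2 * n₁ + (D1 + B2) ^ 2 * n₃ + (3 * G1 + G3 + 1) * R
      ≤ 2 * U1 ^ 2 * K1 := by
    have el : (D1 + B3) ^ 2 * n₁ + (D1 + B2) ^ 2 * n₃ + (3 * G1 + G3 + 1) * R
        = ((n : ℚ) * d + n₂ * n₃) ^ 2 * n₁ + ((n : ℚ) * d + n₁ * n₂) ^ 2 * n₃
          + ((3 * (n₁ : ℚ) + n₃ + 8) * ((n : ℚ) + 1) + 1)
            * (4 * n₁ * n₃ * d ^ 2 * n₂ ^ 2) := by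
      rw [hD1_def, hB2_def, hB3_def, hG1_def, hG3_def, hR_def]; ring
    have er : 2 * U1 ^ 2 * K1 = 2 * ((n : ℚ) * (s + e * n₁)) ^ 2 * n₃ * n₂ ^ 2 := by
      rw [hU1_def, hK1_def]; ring
    rw [el, er]; exact hA2
  have hB2' : 2 * U2 ^ 2 * K1 + (3 * G1 + G3 + 2) * R ≤ D1 ^ 2 * n₁ + D1 ^ 2 * n₃ := by
    have el : 2 * U2 ^ 2 * K1 + (3 * G1 + G3 + 2) * R
        = 2 * ((n : ℚ) * (s - e * n₁)) ^ 2 * n₃ * n₂ ^ 2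
          + ((3 * (n₁ : ℚ) + n₃ + 8) * ((n : ℚ) + 1) + 2)
            * (4 * n₁ * n₃ * d ^ 2 * n₂ ^ 2) := by
      rw [hU2_def, hK1_def, hG1_def, hG3_def, hR_def]; ring
    have er : D1 ^ 2 * n₁ + D1 ^ 2 * n₃ = ((n : ℚ) * d) ^ 2 * n₁ + ((n : ℚ) * d) ^ 2 * n₃ := by
      rw [hD1_def]
    rw [el, er]; exact hB2
  -- grand inequality A : MM + 1 ≤ 2 * T1
  have hMMq : (MM : ℚ) = (TL : ℚ) + TG := by exact_mod_cast hpart2.symm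
  have hAnat : MM + 1 ≤ 2 * T1 := by
    have hAq : ((MM : ℚ) + 1) * R ≤ (2 * (T1 : ℚ)) * R := by
      have expand : ((MM : ℚ) + 1) * R = (TL : ℚ) * R + (TG : ℚ) * R + R := by
        rw [hMMq]; ring
      rw [expand]
      linarith only [f1, f2, f3, hA2']
    have h' : (MM : ℚ) + 1 ≤ 2 * (T1 : ℚ) := le_of_mul_le_mul_right hAq hRpos
    exact_mod_cast h'
  -- grand inequality B : 2 * T2 + 2 ≤ MM
  have hBnat : 2 * T2 + 2 ≤ MM := by
    have hBq : (2 * (T2 : ℚ) + 2) * R ≤ (MM : ℚ) * R := by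
      have expand : (MM : ℚ) * R = (TL : ℚ) * R + (TG : ℚ) * R := by
        rw [hMMq]; ring
      rw [expand]
      linarith only [fB, f2', f3', hB2']
    have h' : 2 * (T2 : ℚ) + 2 ≤ (MM : ℚ) := le_of_mul_le_mul_right hBq hRpos
    exact_mod_cast h'
  -- median bounds
  have hCA : 2 * ((Zf n₁ n₂ n₃ n).filter (fun z => len z ≤ L₁)).card < MM := by
    have hp := hpart L₁
    omega
  have hCB : MM + 2 ≤ 2 * ((Zf n₁ n₂ n₃ n).filter (fun z => len z ≤ L₂)).card := by
    have hp := hpart L₂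
    omega
  obtain ⟨hm1, hm2⟩ := medianLen_bounds hCA hCB
  -- final bound in ℚ
  have hmed1 : (x - e) * n - 1 < medianLen n₁ n₂ n₃ n := by
    calc (x - e) * n - 1 < (L₁ : ℚ) := by linarith only [hL₁lb]
      _ < medianLen n₁ n₂ n₃ n := hm1
  have hmed2 : medianLen n₁ n₂ n₃ n ≤ (x + e) * n + 1 := le_trans hm2 hL₂ub
  have hmq : |medianLen n₁ n₂ n₃ n / (n : ℚ) - x| ≤ e + 1 / n := by
    rw [abs_le]
    constructor
    · have hstep : x - (e + 1 / (n : ℚ)) ≤ medianLen n₁ n₂ n₃ n / n := by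
        rw [le_div_iff₀ hnq0]
        have hexp : (x - (e + 1 / (n : ℚ))) * n = (x - e) * n - 1 := by
          field_simp
          ring
        rw [hexp]
        linarith only [hmed1]
      linarith only [hstep]
    · have hstep : medianLen n₁ n₂ n₃ n / n ≤ x + (e + 1 / (n : ℚ)) := by
        rw [div_le_iff₀ hnq0]
        have hexp : (x + (e + 1 / (n : ℚ))) * n = (x + e) * n + 1 := by
          field_simp
          ring
        rw [hexp]
        linarith only [hmed2]
      linarith only [hstep]
  -- final: the target constant equals x
  have hc2n : (c : ℚ) ^ 2 = (n₁ : ℚ) + 2 * d := by rw [← hn3cq, he3q, he2q]; ring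
  have htarq : (1 / (n₁ : ℚ)) * (1 - (c : ℚ) / (2 * a)) + (1 / (n₃ : ℚ)) * ((c : ℚ) / (2 * a))
      = x := by
    rw [hx_def, hs_def, hn3cq]
    have hane : (a : ℚ) ≠ 0 := haq.ne'
    have hcne : (c : ℚ) ≠ 0 := hcq.ne'
    have h1ne : (n₁ : ℚ) ≠ 0 := h1q.ne'
    field_simp
    linear_combination (-1 : ℚ) * hc2n
  have htarR : (1 / (n₁ : ℝ)) * (1 - (c : ℝ) / (2 * (a : ℝ)))
      + (1 / (n₃ : ℝ)) * ((c : ℝ) / (2 * (a : ℝ))) = ((x : ℚ) : ℝ) := by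
    have hq' := congrArg (fun q : ℚ => (q : ℝ)) htarq
    push_cast at hq'
    linear_combination hq'
  rw [htarR]
  have hcastabs : |(medianLen n₁ n₂ n₃ n : ℝ) / (n : ℝ) - ((x : ℚ) : ℝ)|
      = ((|medianLen n₁ n₂ n₃ n / (n : ℚ) - x| : ℚ) : ℝ) := by
    rw [Rat.cast_abs]
    congr 1
    push_cast
    ring
  rw [hcastabs]
  have hstep1 : ((|medianLen n₁ n₂ n₃ n / (n : ℚ) - x| : ℚ) : ℝ) ≤ ((e + 1 / n : ℚ) : ℝ) :=
    Rat.cast_le.mpr hmq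
  have hne2 : ((e + 1 / n : ℚ) : ℝ) = (e : ℝ) + 1 / (n : ℝ) := by push_cast; ring
  have heR : (e : ℝ) < ε / 2 := lt_of_le_of_lt (by exact_mod_cast heεr) hεrε
  have hnR : (1 : ℝ) / (n : ℝ) < ε / 2 := by
    have hnc : (2 : ℝ) / ε ≤ ((⌈(2 : ℝ) / ε⌉₊ : ℕ) : ℝ) := Nat.le_ceil _
    have hnn : ((⌈(2 : ℝ) / ε⌉₊ + 1 : ℕ) : ℝ) ≤ (n : ℝ) := by exact_mod_cast hnN₃
    have hngt : (2 : ℝ) / ε < (n : ℝ) := by push_cast at hnn; linarith only [hnn, hnc]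
    have hnpos : (0 : ℝ) < n := by
      have h0 : (0 : ℝ) ≤ 2 / ε := by positivity
      linarith only [h0, hngt]
    rw [div_lt_iff₀ hε] at hngt
    rw [div_lt_div_iff₀ hnpos (by norm_num : (0:ℝ) < 2)]
    linarith only [hngt]
  rw [hne2] at hstep1
  linarith only [hstep1, heR, hnR]
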